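/- arXiv:0809.2968 — 8 statements merged into one kernel-verified Lean document; each statement's English description precedes it below -/
import Mathlib

section
/- Transposition invariance: the minimum cardinality K_R(q^m, n, ρ) of a code in GF(q^m)^n with rank covering radius at most ρ equals K_R(q^n, m, ρ), the minimum cardinality of a code in GF(q^n)^m with rank covering radius at most ρ. -/
/-- `KRmat Fq m n ρ` : the minimum cardinality of a code of `m × n` matrices over `GF(q)`
with rank covering radius at most `ρ` (vectors of `GF(q^m)^n` being identified with
`m × n` matrices over `GF(q)` by basis expansion, rank distance = rank of difference). -/
noncomputable def KRmat (Fq : Type*) [Field Fq] [Fintype Fq] (m n ρ : ℕ) : ℕ :=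
  sInf {k | ∃ C : Finset (Matrix (Fin m) (Fin n) Fq), C.card = k ∧
    ∀ V : Matrix (Fin m) (Fin n) Fq, ∃ M ∈ C, (V - M).rank ≤ ρ}

lemma KRmat_set_subset (Fq : Type*) [Field Fq] [Fintype Fq] (m n ρ : ℕ) :
    {k | ∃ C : Finset (Matrix (Fin m) (Fin n) Fq), C.card = k ∧
      ∀ V : Matrix (Fin m) (Fin n) Fq, ∃ M ∈ C, (V - M).rank ≤ ρ} ⊆
    {k | ∃ C : Finset (Matrix (Fin n) (Fin m) Fq), C.card = k ∧
      ∀ V : Matrix (Fin n) (Fin m) Fq, ∃ M ∈ C, (V - M).rank ≤ ρ} := by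
  classical
  rintro k ⟨C, hcard, hcov⟩
  refine ⟨C.image Matrix.transpose, ?_, ?_⟩
  · rw [Finset.card_image_of_injective _ fun A B h => by
      simpa using congrArg Matrix.transpose h]
    exact hcard
  · intro V
    obtain ⟨M, hM, hr⟩ := hcov V.transpose
    refine ⟨M.transpose, Finset.mem_image_of_mem _ hM, ?_⟩
    have : (V - M.transpose) = (V.transpose - M).transpose := by simp [Matrix.transpose_sub]
    rw [this, Matrix.rank_transpose]
    exact hr

/-- Transposition invariance: `K_R(q^m, n, ρ) = K_R(q^n, m, ρ)`. -/
theorem stmt4 (Fq : Type*) [Field Fq] [Fintype Fq] (m n ρ : ℕ) :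
    KRmat Fq m n ρ = KRmat Fq n m ρ := by
  unfold KRmat
  congr 1
  exact le_antisymm (KRmat_set_subset Fq m n ρ) (KRmat_set_subset Fq n m ρ)
end

section
/- For any K vectors v_0, ..., v_{K−1} in GF(q^m)^n with n ≤ m, one can reorder them so that the sequence j ↦ d_R(v_j, {v_0,...,v_{j−1}}) is non-increasing, and then for every a ≥ 1 and every index j with q^{m(a−1)} ≤ j < q^{ma}, the rank distance from v_j to {v_0, ..., v_{j−1}} is at most n − a + 1. -/
set_option maxHeartbeats 1000000


/-- The rank weight of a vector `x ∈ GF(q^m)^n`: the dimension over `GF(q)` of the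
`GF(q)`-span of the coordinates of `x`. -/
noncomputable def rankWeight (Fq : Type*) [Field Fq] {Fqm : Type*} [Field Fqm] [Algebra Fq Fqm]
    {n : ℕ} (x : Fin n → Fqm) : ℕ :=
  Module.finrank Fq (Submodule.span Fq (Set.range x))

noncomputable def argmaxOn {α : Type*} [Nonempty α] (s : Finset α) (f : α → ℕ) : α :=
  if h : s.Nonempty then (Finset.exists_max_image s f h).choose else Classical.arbitrary α

lemma argmaxOn_mem {α : Type*} [Nonempty α] {s : Finset α} (f : α → ℕ) (h : s.Nonempty) :
    argmaxOn s f ∈ s := by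
  rw [argmaxOn, dif_pos h]
  exact (Finset.exists_max_image s f h).choose_spec.1

lemma argmaxOn_le {α : Type*} [Nonempty α] {s : Finset α} (f : α → ℕ) (h : s.Nonempty)
    {a : α} (ha : a ∈ s) : f a ≤ f (argmaxOn s f) := by
  rw [argmaxOn, dif_pos h]
  exact (Finset.exists_max_image s f h).choose_spec.2 a ha

noncomputable def fft {α : Type*} [Fintype α] [DecidableEq α] [Nonempty α]
    (W : α → α → ℕ) : ℕ → α
  | j => argmaxOn
      (Finset.univ \ Finset.image (fun i : Fin j => fft W i) Finset.univ)
      (fun x => sInf {d | ∃ i : Fin j, d = W x (fft W i)})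
  termination_by j => j
  decreasing_by all_goals exact i.isLt

lemma fft_def {α : Type*} [Fintype α] [DecidableEq α] [Nonempty α] (W : α → α → ℕ) (j : ℕ) :
    fft W j = argmaxOn
      (Finset.univ \ Finset.image (fun i : Fin j => fft W i) Finset.univ)
      (fun x => sInf {d | ∃ i : Fin j, d = W x (fft W i)}) := by
  rw [fft]

lemma fft_cand_nonempty {α : Type*} [Fintype α] [DecidableEq α] [Nonempty α]
    (W : α → α → ℕ) {j : ℕ} (hj : j < Fintype.card α) :
    (Finset.univ \ Finset.image (fun i : Fin j => fft W i) Finset.univ).Nonempty := by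
  rw [← Finset.card_pos, Finset.card_sdiff_of_subset (Finset.subset_univ _), Finset.card_univ]
  have h1 : (Finset.image (fun i : Fin j => fft W i) Finset.univ).card ≤ j := by
    refine (Finset.card_image_le).trans ?_
    simp
  omega

lemma fft_ne {α : Type*} [Fintype α] [DecidableEq α] [Nonempty α]
    (W : α → α → ℕ) {j : ℕ} (hj : j < Fintype.card α) {i : ℕ} (hij : i < j) :
    fft W j ≠ fft W i := by
  have hmem := argmaxOn_mem (fun x => sInf {d | ∃ i : Fin j, d = W x (fft W i)})
    (fft_cand_nonempty W hj)
  rw [← fft_def] at hmem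
  rw [Finset.mem_sdiff, Finset.mem_image] at hmem
  intro hcon
  exact hmem.2 ⟨⟨i, hij⟩, Finset.mem_univ _, hcon.symm⟩

lemma fft_max {α : Type*} [Fintype α] [DecidableEq α] [Nonempty α]
    (W : α → α → ℕ) (j : ℕ) (x : α) (hx : ∀ i < j, x ≠ fft W i) :
    sInf {d | ∃ i : Fin j, d = W x (fft W i)} ≤
    sInf {d | ∃ i : Fin j, d = W (fft W j) (fft W i)} := by
  have hxmem : x ∈ Finset.univ \ Finset.image (fun i : Fin j => fft W i) Finset.univ := by
    rw [Finset.mem_sdiff, Finset.mem_image]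
    exact ⟨Finset.mem_univ _, fun ⟨i, _, hi⟩ => hx i i.isLt hi.symm⟩
  conv_rhs => rw [fft_def]
  exact argmaxOn_le (fun x => sInf {d | ∃ i : Fin j, d = W x (fft W i)}) ⟨x, hxmem⟩ hxmem

lemma rankWeight_le_of_prefix_zero (Fq : Type*) [Field Fq] {Fqm : Type*} [Field Fqm]
    [Algebra Fq Fqm] {n : ℕ} (x : Fin n → Fqm) (t : ℕ)
    (h : ∀ i : Fin n, (i : ℕ) < t → x i = 0) :
    rankWeight Fq x ≤ n - t := by
  classical
  set g : Fin (n - t) → Fqm := fun l => x ⟨t + l, by omega⟩ with hg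
  have hsub : Set.range x ⊆ (Submodule.span Fq (Set.range g) : Set Fqm) := by
    rintro _ ⟨i, rfl⟩
    by_cases hi : (i : ℕ) < t
    · rw [h i hi]
      exact (Submodule.span Fq (Set.range g)).zero_mem
    · have hi2 : (i : ℕ) - t < n - t := by omega
      have hxi : x i = g ⟨(i : ℕ) - t, hi2⟩ := by
        simp only [hg]
        congr 1
        ext
        simp
        omega
      rw [hxi]
      exact Submodule.subset_span ⟨_, rfl⟩
  have hle : Submodule.span Fq (Set.range x) ≤ Submodule.span Fq (Set.range g) :=
    Submodule.span_le.2 hsub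
  haveI : Module.Finite Fq (Submodule.span Fq (Set.range g)) :=
    FiniteDimensional.span_of_finite Fq (Set.finite_range g)
  refine (Submodule.finrank_mono hle).trans ?_
  refine (finrank_span_le_card (Set.range g)).trans ?_
  rw [Set.toFinset_range]
  exact (Finset.card_image_le).trans (by simp)

/-- Any `K` vectors of `GF(q^m)^n` (`n ≤ m`) can be reordered so that
`j ↦ d_R(v_j, {v_0, …, v_{j-1}})` is non-increasing (for `j ≥ 1`), and then for all `a ≥ 1`
and `q^{m(a-1)} ≤ j < q^{ma}`, the distance from `v_j` to its predecessors is at most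
`n - a + 1`. -/
theorem stmt10 (q m n K : ℕ) (Fq Fqm : Type*) [Field Fq] [Fintype Fq] [Field Fqm] [Fintype Fqm]
    [Algebra Fq Fqm] (hq : Fintype.card Fq = q) (hm : Module.finrank Fq Fqm = m)
    (hnm : n ≤ m) (v : Fin K → (Fin n → Fqm)) :
    ∃ σ : Equiv.Perm (Fin K),
      (∀ j k : Fin K, 1 ≤ (j : ℕ) → j ≤ k →
        sInf {d | ∃ i : Fin K, i < k ∧ d = rankWeight Fq (v (σ k) - v (σ i))} ≤
        sInf {d | ∃ i : Fin K, i < j ∧ d = rankWeight Fq (v (σ j) - v (σ i))}) ∧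
      (∀ (a : ℕ) (j : Fin K), 1 ≤ a → q ^ (m * (a - 1)) ≤ (j : ℕ) → (j : ℕ) < q ^ (m * a) →
        sInf {d | ∃ i : Fin K, i < j ∧ d = rankWeight Fq (v (σ j) - v (σ i))} ≤ n - a + 1) := by
  classical
  rcases Nat.eq_zero_or_pos K with hK0 | hKpos
  · subst hK0
    exact ⟨Equiv.refl _, fun j k _ _ => j.elim0, fun a j _ _ _ => j.elim0⟩
  haveI : Nonempty (Fin K) := ⟨⟨0, hKpos⟩⟩
  set W : Fin K → Fin K → ℕ := fun a b => rankWeight Fq (v a - v b) with hW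
  set p : ℕ → Fin K := fft W with hp
  -- injectivity
  have hcard : Fintype.card (Fin K) = K := Fintype.card_fin K
  have hinj : Function.Injective (fun i : Fin K => p (i : ℕ)) := by
    intro i j hij
    by_contra hne
    rcases Ne.lt_or_gt hne with h | h
    · exact fft_ne W (by rw [hcard]; exact j.isLt) h hij.symm
    · exact fft_ne W (by rw [hcard]; exact i.isLt) h hij
  set σ : Equiv.Perm (Fin K) :=
    Equiv.ofBijective _ (Finite.injective_iff_bijective.mp hinj) with hσ
  have hσapp : ∀ k : Fin K, σ k = p (k : ℕ) := fun k => rfl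
  -- value function
  set F : ℕ → ℕ := fun j => sInf {d | ∃ i : Fin j, d = W (p j) (p (i : ℕ))} with hF
  have hsinf : ∀ k : Fin K,
      sInf {d | ∃ i : Fin K, i < k ∧ d = rankWeight Fq (v (σ k) - v (σ i))} = F (k : ℕ) := by
    intro k
    congr 1
    ext d
    constructor
    · rintro ⟨i, hik, rfl⟩
      exact ⟨⟨(i : ℕ), hik⟩, rfl⟩
    · rintro ⟨i, rfl⟩
      exact ⟨⟨(i : ℕ), lt_trans i.isLt k.isLt⟩, i.isLt, rfl⟩
  -- step monotonicity
  have hstep : ∀ j : ℕ, 1 ≤ j → j + 1 < K → F (j + 1) ≤ F j := by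
    intro j hj hjK
    have hne : ∀ i < j, p (j + 1) ≠ p i := by
      intro i hi
      exact fft_ne W (by rw [hcard]; exact hjK) (by omega)
    have h2 : sInf {d | ∃ i : Fin j, d = W (p (j + 1)) (p (i : ℕ))} ≤ F j :=
      fft_max W j _ hne
    refine le_trans ?_ h2
    have hTne : {d | ∃ i : Fin j, d = W (p (j + 1)) (p (i : ℕ))}.Nonempty :=
      ⟨_, ⟨⟨0, hj⟩, rfl⟩⟩
    obtain ⟨i, hi⟩ := Nat.sInf_mem hTne
    exact Nat.sInf_le ⟨⟨(i : ℕ), lt_trans i.isLt (Nat.lt_succ_self j)⟩, hi⟩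
  -- full monotonicity
  have hmono : ∀ j k : ℕ, 1 ≤ j → j ≤ k → k < K → F k ≤ F j := by
    intro j k hj hjk hkK
    induction k with
    | zero => omega
    | succ k ih =>
      rcases eq_or_lt_of_le hjk with h | h
      · rw [h]
      · have h1 : j ≤ k := by omega
        exact le_trans (hstep k (by omega) hkK) (ih h1 (by omega))
  refine ⟨σ, ?_, ?_⟩
  · intro j k hj hjk
    rw [hsinf j, hsinf k]
    exact hmono (j : ℕ) (k : ℕ) hj hjk k.isLt
  · intro a j ha hj1 hj2
    set t := min (a - 1) n with ht
    have htn : t ≤ n := min_le_right _ _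
    have hq1 : 1 ≤ q := hq ▸ Fintype.card_pos
    have hcardFqm : Fintype.card Fqm = q ^ m := by
      rw [Module.card_eq_pow_finrank (K := Fq) (V := Fqm), hq, hm]
    have hlt : Fintype.card (Fin t → Fqm) < Fintype.card (Fin ((j : ℕ) + 1)) := by
      rw [Fintype.card_fin, Fintype.card_fun, Fintype.card_fin, hcardFqm, ← pow_mul]
      have h1 : q ^ (m * t) ≤ q ^ (m * (a - 1)) :=
        Nat.pow_le_pow_right hq1 (Nat.mul_le_mul_left m (min_le_left _ _))
      omega
    obtain ⟨i1, i2, hne, heq⟩ := Fintype.exists_ne_map_eq_of_card_lt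
      (fun i : Fin ((j : ℕ) + 1) => fun l : Fin t =>
        v (σ ⟨(i : ℕ), lt_of_le_of_lt (Nat.lt_succ_iff.mp i.isLt) j.isLt⟩) (Fin.castLE htn l))
      hlt
    obtain ⟨b1, b2, hb, heqb⟩ : ∃ b1 b2 : Fin ((j : ℕ) + 1), b1 < b2 ∧
        (fun l : Fin t =>
          v (σ ⟨(b1 : ℕ), lt_of_le_of_lt (Nat.lt_succ_iff.mp b1.isLt) j.isLt⟩) (Fin.castLE htn l)) =
        (fun l : Fin t =>
          v (σ ⟨(b2 : ℕ), lt_of_le_of_lt (Nat.lt_succ_iff.mp b2.isLt) j.isLt⟩) (Fin.castLE htn l)) := by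
      rcases Ne.lt_or_gt hne with h | h
      · exact ⟨i1, i2, h, heq⟩
      · exact ⟨i2, i1, h, heq.symm⟩
    set I1 : Fin K := ⟨(b1 : ℕ), lt_of_le_of_lt (Nat.lt_succ_iff.mp b1.isLt) j.isLt⟩ with hI1
    set I2 : Fin K := ⟨(b2 : ℕ), lt_of_le_of_lt (Nat.lt_succ_iff.mp b2.isLt) j.isLt⟩ with hI2
    have hx0 : ∀ i : Fin n, (i : ℕ) < t → (v (σ I2) - v (σ I1)) i = 0 := by
      intro i hi
      have hcast : Fin.castLE htn ⟨(i : ℕ), hi⟩ = i := rfl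
      have := congrFun heqb ⟨(i : ℕ), hi⟩
      rw [hcast] at this
      simp only [Pi.sub_apply]
      rw [← this]
      ring
    have hxw : rankWeight Fq (v (σ I2) - v (σ I1)) ≤ n - t :=
      rankWeight_le_of_prefix_zero Fq _ t hx0
    have h5 : n - t ≤ n - a + 1 := by
      rcases le_total (a - 1) n with h | h
      · have h6 : t = a - 1 := min_eq_left h
        omega
      · have h6 : t = n := min_eq_right h
        omega
    have hxw' : rankWeight Fq (v (σ I2) - v (σ I1)) ≤ n - a + 1 := hxw.trans h5
    have hb' : (b1 : ℕ) < (b2 : ℕ) := hb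
    have hF2 : F ((I2 : ℕ)) ≤ n - a + 1 := by
      refine le_trans (Nat.sInf_le ⟨⟨(b1 : ℕ), hb'⟩, rfl⟩) hxw'
    rw [hsinf j]
    refine le_trans (hmono (I2 : ℕ) (j : ℕ) (Nat.lt_of_le_of_lt (Nat.zero_le _) hb') (Nat.lt_succ_iff.mp b2.isLt) j.isLt) hF2
end

section
/- Greedy covering step: let C ⊆ GF(q^m)^n be a code that leaves exactly t > 0 vectors uncovered at rank radius ρ, and suppose the set N of all vectors within rank distance ρ of some uncovered vector has size at most q^{mn} − |C|. Then there exists a vector y ∉ C such that C ∪ {y} leaves at most t − ⌈t·v(ρ)/(q^{mn} − |C|)⌉ vectors uncovered. -/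
section aux

open Finset

variable {Fq Fqm : Type*} [Field Fq] [Field Fqm] [Algebra Fq Fqm] {n : ℕ}

lemma rankWeight_neg (v : Fin n → Fqm) : rankWeight Fq (-v) = rankWeight Fq v := by
  unfold rankWeight
  have h : Set.range (-v) = -Set.range v := by
    ext z
    simp only [Set.mem_range, Pi.neg_apply, Set.mem_neg]
    constructor
    · rintro ⟨i, hi⟩; exact ⟨i, neg_eq_iff_eq_neg.mp hi⟩
    · rintro ⟨i, hi⟩; exact ⟨i, by rw [hi, neg_neg]⟩
  rw [h, Submodule.span_neg]

lemma rankWeight_sub_comm (x y : Fin n → Fqm) :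
    rankWeight Fq (x - y) = rankWeight Fq (y - x) := by
  rw [← neg_sub y x, rankWeight_neg]

lemma rankWeight_zero : rankWeight Fq (0 : Fin n → Fqm) = 0 := by
  unfold rankWeight
  have h : Submodule.span Fq (Set.range (0 : Fin n → Fqm)) = ⊥ := by
    rw [Submodule.span_eq_bot]
    rintro x ⟨i, rfl⟩; rfl
  rw [h, finrank_bot]

end aux

set_option maxHeartbeats 1000000 in
/-- Greedy covering step: if `C` leaves exactly `t > 0` vectors uncovered at rank radius
`ρ`, and the set of vectors within distance `ρ` of some uncovered vector has size at most
`q^{mn} - |C|`, then some `y ∉ C` can be added so that at most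
`t - ⌈t·v(ρ)/(q^{mn} - |C|)⌉` vectors remain uncovered. -/
theorem stmt11 (q m n ρ t : ℕ) (Fq Fqm : Type*) [Field Fq] [Fintype Fq] [Field Fqm] [Fintype Fqm]
    [Algebra Fq Fqm] (hq : Fintype.card Fq = q) (hm : Module.finrank Fq Fqm = m)
    (hnm : n ≤ m) (hρ : ρ ≤ n) (C : Finset (Fin n → Fqm))
    (ht : Nat.card {x : Fin n → Fqm | ∀ c ∈ C, ρ < rankWeight Fq (x - c)} = t)
    (ht0 : 0 < t)
    (hN : Nat.card {y : Fin n → Fqm | ∃ x : Fin n → Fqm,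
            (∀ c ∈ C, ρ < rankWeight Fq (x - c)) ∧ rankWeight Fq (y - x) ≤ ρ} ≤
          q ^ (m * n) - C.card) :
    ∃ y : Fin n → Fqm, y ∉ C ∧
      Nat.card {x : Fin n → Fqm |
          (∀ c ∈ C, ρ < rankWeight Fq (x - c)) ∧ ρ < rankWeight Fq (x - y)} ≤
        t - (t * Nat.card {z : Fin n → Fqm // rankWeight Fq z ≤ ρ} + (q ^ (m * n) - C.card) - 1)
              / (q ^ (m * n) - C.card) := by
  classical
  open Finset in
  have hcard_set : ∀ (Q : (Fin n → Fqm) → Prop) (inst : DecidablePred Q),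
      Nat.card {x | Q x} = (@Finset.filter _ Q inst univ).card := by
    intro Q inst
    rw [Nat.card_eq_fintype_card, Fintype.card_subtype]
    exact congrArg Finset.card (Finset.filter_congr (fun x _ => by simp))
  set v := Nat.card {z : Fin n → Fqm // rankWeight Fq z ≤ ρ} with hv
  set D := q ^ (m * n) - C.card with hD
  set P : (Fin n → Fqm) → Prop := fun x => ∀ c ∈ C, ρ < rankWeight Fq (x - c) with hP
  set U : Finset (Fin n → Fqm) := univ.filter P with hU
  set Ns : Finset (Fin n → Fqm) :=
    univ.filter (fun y => ∃ x, P x ∧ rankWeight Fq (y - x) ≤ ρ) with hNs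
  -- card translations
  have hUcard : U.card = t := by
    rw [hU]; exact (hcard_set P _).symm.trans ht
  have hNscard : Ns.card ≤ D := by
    rw [hNs]; exact le_trans (le_of_eq (hcard_set _ _).symm) hN
  -- ball volume
  have hvcard : v = (univ.filter (fun z : Fin n → Fqm => rankWeight Fq z ≤ ρ)).card := by
    rw [hv, Nat.card_eq_fintype_card, Fintype.card_subtype]
  have hball : ∀ x : Fin n → Fqm,
      (univ.filter (fun y : Fin n → Fqm => rankWeight Fq (y - x) ≤ ρ)).card = v := by
    intro x
    rw [hvcard]
    refine Finset.card_nbij' (fun y => y - x) (fun z => z + x) ?_ ?_ ?_ ?_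
    · intro a ha; simp only [mem_filter, mem_univ, true_and]
      simpa using (mem_filter.mp ha).2
    · intro a ha; simp only [mem_filter, mem_univ, true_and]
      simpa using (mem_filter.mp ha).2
    · intro a _; simp
    · intro a _; simp
  have hv1 : 1 ≤ v := by
    rw [hvcard]
    refine Finset.card_pos.mpr ⟨0, ?_⟩
    simp [rankWeight_zero]
  -- uncovered vectors lie in N, so Ns is nonempty and D ≥ 1
  have hUsubNs : U ⊆ Ns := by
    intro x hx
    simp only [hNs, mem_filter, mem_univ, true_and]
    exact ⟨x, (mem_filter.mp hx).2, by rw [sub_self, rankWeight_zero]; exact Nat.zero_le _⟩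
  have hUne : U.Nonempty := by
    rw [← Finset.card_pos, hUcard]; exact ht0
  have hNsne : Ns.Nonempty := hUne.mono hUsubNs
  have hD1 : 1 ≤ D := le_trans (Finset.card_pos.mpr hNsne) hNscard
  -- double counting
  have hdouble : ∑ y ∈ Ns, (U.filter (fun x => rankWeight Fq (x - y) ≤ ρ)).card = t * v := by
    have step1 : ∑ y ∈ Ns, (U.filter (fun x => rankWeight Fq (x - y) ≤ ρ)).card
        = ∑ x ∈ U, (Ns.filter (fun y => rankWeight Fq (x - y) ≤ ρ)).card := by
      simp_rw [Finset.card_filter]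
      exact Finset.sum_comm
    rw [step1]
    have step2 : ∀ x ∈ U, (Ns.filter (fun y => rankWeight Fq (x - y) ≤ ρ)).card = v := by
      intro x hx
      have heq : Ns.filter (fun y => rankWeight Fq (x - y) ≤ ρ)
          = univ.filter (fun y : Fin n → Fqm => rankWeight Fq (y - x) ≤ ρ) := by
        ext y
        simp only [hNs, mem_filter, mem_univ, true_and, Finset.filter_filter]
        constructor
        · rintro ⟨-, h2⟩; rwa [rankWeight_sub_comm] at h2
        · intro h
          exact ⟨⟨x, (mem_filter.mp hx).2, h⟩, by rwa [rankWeight_sub_comm]⟩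
      rw [heq, hball]
    rw [Finset.sum_congr rfl step2, Finset.sum_const, hUcard, smul_eq_mul]
  -- pigeonhole: some y in Ns covers at least k := ⌈t*v/D⌉ uncovered vectors
  set k := (t * v + D - 1) / D with hk
  have htv1 : 1 ≤ t * v := Nat.one_le_iff_ne_zero.mpr (by positivity)
  have hdm : D * k + (t * v + D - 1) % D = t * v + D - 1 := by
    rw [hk]; exact Nat.div_add_mod _ _
  have hmod : (t * v + D - 1) % D < D := Nat.mod_lt _ (by omega)
  have hklb : t * v ≤ D * k := by omega
  have hkub : D * k ≤ t * v + D - 1 := by omega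
  have hk1 : 1 ≤ k := by
    rcases Nat.eq_zero_or_pos k with h | h
    · rw [h, Nat.mul_zero] at hklb; omega
    · exact h
  have hpigeon : ∃ y ∈ Ns, k ≤ (U.filter (fun x => rankWeight Fq (x - y) ≤ ρ)).card := by
    by_contra hcon
    push_neg at hcon
    have hsum : t * v ≤ Ns.card * (k - 1) := by
      rw [← hdouble]
      calc ∑ y ∈ Ns, (U.filter (fun x => rankWeight Fq (x - y) ≤ ρ)).card
          ≤ ∑ _y ∈ Ns, (k - 1) := by
            refine Finset.sum_le_sum fun y hy => ?_
            have := hcon y hy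
            omega
        _ = Ns.card * (k - 1) := by rw [Finset.sum_const, smul_eq_mul]
    have hA : t * v ≤ D * (k - 1) := le_trans hsum (Nat.mul_le_mul_right _ hNscard)
    have hB : D * (k - 1) + D = D * k := by
      have : k - 1 + 1 = k := by omega
      calc D * (k - 1) + D = D * (k - 1 + 1) := by ring
        _ = D * k := by rw [this]
    omega
  obtain ⟨y, hyNs, hycov⟩ := hpigeon
  refine ⟨y, ?_, ?_⟩
  · -- y ∉ C
    intro hyC
    obtain ⟨x, hxP, hxd⟩ := (mem_filter.mp hyNs).2
    have := hxP y hyC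
    rw [rankWeight_sub_comm] at this
    omega
  · -- remaining uncovered count
    have hrem : Nat.card {x : Fin n → Fqm | P x ∧ ρ < rankWeight Fq (x - y)}
        = (U.filter (fun x => ρ < rankWeight Fq (x - y))).card := by
      refine ((hcard_set _ (Classical.decPred _)).trans ?_)
      apply congrArg Finset.card
      ext x
      simp [hU]
    have hsplit : (U.filter (fun x => rankWeight Fq (x - y) ≤ ρ)).card
        + (U.filter (fun x => ρ < rankWeight Fq (x - y))).card = t := by
      rw [← hUcard]
      have h := Finset.card_filter_add_card_filter_not
        (s := U) (p := fun x => rankWeight Fq (x - y) ≤ ρ)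
      simp only [not_le] at h
      exact h
    calc Nat.card {x : Fin n → Fqm | P x ∧ ρ < rankWeight Fq (x - y)}
        = (U.filter (fun x => ρ < rankWeight Fq (x - y))).card := hrem
      _ ≤ t - k := by omega
end

section
/- The volume of the union of any K balls of rank radius ρ in GF(q^m)^n (n ≤ m) is at most v(ρ) + Σ_{a=1}^{l} (q^{am} − q^{(a−1)m})·[v(ρ) − I(ρ, n−a+1)] + (K − q^{lm})·[v(ρ) − I(ρ, n−l)], where l = ⌊log_{q^m} K⌋ and I(ρ, d) is the minimum over pairs of centers at rank distance d of the volume of the intersection of the two balls of radius ρ around them. -/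
/-- `interVol Fq Fqm n ρ d` : the intersection volume `I(ρ, d)` of two balls of rank radius
`ρ` in `GF(q^m)^n` whose centers are at rank distance `d` (taken as the minimum over such
pairs of centers; it is in fact independent of the pair by distance-transitivity). -/
noncomputable def interVol (Fq Fqm : Type*) [Field Fq] [Field Fqm] [Algebra Fq Fqm]
    (n ρ d : ℕ) : ℕ :=
  sInf {k | ∃ c₁ c₂ : Fin n → Fqm, rankWeight Fq (c₁ - c₂) = d ∧
    k = Nat.card {x : Fin n → Fqm //
          rankWeight Fq (x - c₁) ≤ ρ ∧ rankWeight Fq (x - c₂) ≤ ρ}}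

open Submodule Set Module

section helpers

variable {Fq Fqm : Type*} [Field Fq] [Field Fqm] [Algebra Fq Fqm]
variable [Fintype Fq] [Fintype Fqm] {n ρ : ℕ}

instance rkAuxFD : FiniteDimensional Fq Fqm := Module.finite_iff_finite.mpr inferInstance

lemma helperB {H : Submodule Fq Fqm} {b : Fqm} (hbH : b ∉ H) {x : Fqm} (hx : x ∈ H) {a : Fq}
    (h : x + a • b = 0) : x = 0 ∧ a = 0 := by
  have ha : a = 0 := by
    by_contra ha
    apply hbH
    have h1 : a • b = -x := by rw [eq_neg_iff_add_eq_zero, add_comm]; exact h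
    have h2 : b = a⁻¹ • (-x) := by
      rw [← h1, smul_smul, inv_mul_cancel₀ ha, one_smul]
    rw [h2]
    exact H.smul_mem _ (H.neg_mem hx)
  subst ha
  refine ⟨by simpa using h, rfl⟩

lemma rankWeight_LF (x : Fin n → Fqm) :
    rankWeight Fq x = finrank Fq (LinearMap.range (Fintype.linearCombination Fq x)) := by
  rw [rankWeight, Fintype.range_linearCombination]

lemma rw_add_ker (x : Fin n → Fqm) :
    rankWeight Fq x + finrank Fq (LinearMap.ker (Fintype.linearCombination Fq x)) = n := by
  rw [rankWeight_LF]
  have := LinearMap.finrank_range_add_finrank_ker (Fintype.linearCombination Fq x)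
  rwa [Module.finrank_fin_fun] at this

lemma LF_expand (x : Fin n → Fqm) (b : Fqm) (α : Fin n → Fq) (lam : Fin n → Fq) :
    (Fintype.linearCombination Fq (fun i => x i + α i • b)) lam =
      (Fintype.linearCombination Fq x) lam +
        ((Fintype.linearCombination Fq α) lam) • b := by
  simp only [Fintype.linearCombination_apply, smul_add, Finset.sum_add_distrib]
  congr 1
  rw [Finset.sum_smul]
  refine Finset.sum_congr rfl fun i _ => ?_
  rw [smul_smul, smul_eq_mul]

lemma ker_add_smul {H : Submodule Fq Fqm} {b : Fqm} (hbH : b ∉ H) (x : Fin n → Fqm)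
    (hx : ∀ i, x i ∈ H) (α : Fin n → Fq) :
    LinearMap.ker (Fintype.linearCombination Fq (fun i => x i + α i • b)) =
      LinearMap.ker (Fintype.linearCombination Fq x) ⊓
        LinearMap.ker (Fintype.linearCombination Fq α) := by
  ext lam
  simp only [LinearMap.mem_ker, Submodule.mem_inf, LF_expand x b α lam]
  constructor
  · intro h
    have hmem : (Fintype.linearCombination Fq x) lam ∈ H := by
      rw [Fintype.linearCombination_apply]
      exact Submodule.sum_mem _ fun i _ => H.smul_mem _ (hx i)
    exact helperB hbH hmem h
  · rintro ⟨h1, h2⟩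
    rw [h1, h2, zero_smul, add_zero]

lemma weight_add_smul_le (x : Fin n → Fqm) (b : Fqm) (γ : Fin n → Fq) :
    rankWeight Fq (fun i => x i + γ i • b) ≤ rankWeight Fq x + 1 := by
  rcases eq_or_ne b 0 with rfl | hb0
  · simp only [smul_zero, add_zero]
    exact Nat.le_succ _
  · have hspan : span Fq (range fun i => x i + γ i • b) ≤ span Fq (range x) ⊔ span Fq {b} := by
      rw [span_le]
      rintro _ ⟨i, rfl⟩
      exact add_mem (mem_sup_left (subset_span ⟨i, rfl⟩))
        (mem_sup_right (smul_mem _ _ (mem_span_singleton_self b)))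
    have h1 : finrank Fq ↥(span Fq (range fun i => x i + γ i • b)) ≤
        finrank Fq ↥(span Fq (range x) ⊔ span Fq {b}) := Submodule.finrank_mono hspan
    have h2 := Submodule.finrank_sup_add_finrank_inf_eq (span Fq (range x)) (span Fq {b})
    have h3 : finrank Fq ↥(span Fq ({b} : Set Fqm)) = 1 := finrank_span_singleton hb0
    have e1 : rankWeight Fq (fun i => x i + γ i • b) =
        finrank Fq ↥(span Fq (range fun i => x i + γ i • b)) := rfl
    have e2 : rankWeight Fq x = finrank Fq ↥(span Fq (range x)) := rfl
    omega

lemma weight_mono_add_smul {H : Submodule Fq Fqm} {b : Fqm} (hbH : b ∉ H) (x : Fin n → Fqm)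
    (hx : ∀ i, x i ∈ H) (γ : Fin n → Fq) :
    rankWeight Fq x ≤ rankWeight Fq (fun i => x i + γ i • b) := by
  have h1 := rw_add_ker (Fq := Fq) (fun i => x i + γ i • b)
  have h2 := rw_add_ker (Fq := Fq) x
  have h3 : finrank Fq ↥(LinearMap.ker (Fintype.linearCombination Fq
      (fun i => x i + γ i • b))) ≤
      finrank Fq ↥(LinearMap.ker (Fintype.linearCombination Fq x)) := by
    rw [ker_add_smul hbH x hx γ]
    exact Submodule.finrank_mono inf_le_left
  omega

lemma weight_subclosed {H : Submodule Fq Fqm} {b : Fqm} (hbH : b ∉ H) (x : Fin n → Fqm)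
    (hx : ∀ i, x i ∈ H) {α β : Fin n → Fq}
    (hα : rankWeight Fq (fun i => x i + α i • b) ≤ ρ)
    (hβ : rankWeight Fq (fun i => x i + β i • b) ≤ ρ) :
    rankWeight Fq (fun i => x i + (α - β) i • b) ≤ ρ := by
  have hxρ : rankWeight Fq x ≤ ρ := le_trans (weight_mono_add_smul hbH x hx α) hα
  rcases lt_or_eq_of_le hxρ with hlt | heq
  · have := weight_add_smul_le x b (α - β)
    omega
  · -- rankWeight x = ρ
    have key : ∀ γ : Fin n → Fq, rankWeight Fq (fun i => x i + γ i • b) ≤ ρ →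
        LinearMap.ker (Fintype.linearCombination Fq x) ≤
          LinearMap.ker (Fintype.linearCombination Fq γ) := by
      intro γ hγ
      have h1 := rw_add_ker (Fq := Fq) (fun i => x i + γ i • b)
      have h2 := rw_add_ker (Fq := Fq) x
      rw [ker_add_smul hbH x hx γ] at h1
      have hmono : rankWeight Fq x ≤ rankWeight Fq (fun i => x i + γ i • b) :=
        weight_mono_add_smul hbH x hx γ
      have hfr : finrank Fq ↥(LinearMap.ker (Fintype.linearCombination Fq x)) ≤
          finrank Fq ↥(LinearMap.ker (Fintype.linearCombination Fq x) ⊓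
            LinearMap.ker (Fintype.linearCombination Fq γ)) := by omega
      have := Submodule.eq_of_le_of_finrank_le inf_le_left hfr
      exact inf_eq_left.mp this
    have hKα := key α hα
    have hKβ := key β hβ
    have hsub : LinearMap.ker (Fintype.linearCombination Fq x) ≤
        LinearMap.ker (Fintype.linearCombination Fq (α - β)) := by
      intro lam hl
      have hα' := hKα hl
      have hβ' := hKβ hl
      rw [LinearMap.mem_ker] at hα' hβ' ⊢
      have hd : (Fintype.linearCombination Fq (α - β)) lam =
          (Fintype.linearCombination Fq α) lam -
            (Fintype.linearCombination Fq β) lam := by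
        simp only [Fintype.linearCombination_apply, Pi.sub_apply, smul_sub, Finset.sum_sub_distrib]
      rw [hd, hα', hβ', sub_zero]
    have h1 := rw_add_ker (Fq := Fq) (fun i => x i + (α - β) i • b)
    have h2 := rw_add_ker (Fq := Fq) x
    rw [ker_add_smul hbH x hx (α - β), inf_eq_left.mpr hsub] at h1
    omega

lemma card_shift_rank {H : Submodule Fq Fqm} {b : Fqm} (hbH : b ∉ H)
    (x₁ x₂ : Fin n → Fqm) (hx₁ : ∀ i, x₁ i ∈ H) (hx₂ : ∀ i, x₂ i ∈ H) (δ : Fin n → Fq) :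
    Nat.card {α : Fin n → Fq //
        (rankWeight Fq (fun i => x₂ i + (α - δ) i • b) ≤ ρ) ∧
        (rankWeight Fq (fun i => x₁ i + α i • b) ≤ ρ)} ≤
    Nat.card {α : Fin n → Fq //
        (rankWeight Fq (fun i => x₂ i + α i • b) ≤ ρ) ∧
        (rankWeight Fq (fun i => x₁ i + α i • b) ≤ ρ)} := by
  cases isEmpty_or_nonempty {α : Fin n → Fq //
      (rankWeight Fq (fun i => x₂ i + (α - δ) i • b) ≤ ρ) ∧
      (rankWeight Fq (fun i => x₁ i + α i • b) ≤ ρ)} with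
  | inl h => simp [Nat.card_of_isEmpty]
  | inr h =>
    obtain ⟨⟨γ, hγ₂, hγ₁⟩⟩ := h
    refine Nat.card_le_card_of_injective (fun z => ⟨z.1 - γ, ?_, ?_⟩) ?_
    case _ z =>
      have hkey := weight_subclosed hbH x₂ hx₂ z.2.1 hγ₂
      have hfun : z.1 - δ - (γ - δ) = z.1 - γ := sub_sub_sub_cancel_right _ _ _
      rwa [hfun] at hkey
    case _ z =>
      exact weight_subclosed hbH x₁ hx₁ z.2.2 hγ₁
    intro a b' hab
    apply Subtype.ext
    have : a.1 - γ = b'.1 - γ := congrArg Subtype.val hab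
    exact sub_left_injective this

set_option maxHeartbeats 1000000 in
/-- One-step monotonicity: a center of one higher rank with no larger double-ball count. -/
lemma step_lemma {m : ℕ} (hm : Module.finrank Fq Fqm = m) (hnm : n ≤ m)
    (c : Fin n → Fqm) (hen : rankWeight Fq c < n) :
    ∃ c' : Fin n → Fqm, rankWeight Fq c' = rankWeight Fq c + 1 ∧
      Nat.card {x : Fin n → Fqm //
          rankWeight Fq (x - c') ≤ ρ ∧ rankWeight Fq (x - 0) ≤ ρ} ≤
      Nat.card {x : Fin n → Fqm //
          rankWeight Fq (x - c) ≤ ρ ∧ rankWeight Fq (x - 0) ≤ ρ} := by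
  classical
  set C : Submodule Fq Fqm := span Fq (range c) with hC
  -- find a coordinate in the span of the others
  have hi₀ : ∃ i₀ : Fin n, c i₀ ∈ span Fq (c '' (Set.univ \ {i₀})) := by
    by_contra hcon
    push_neg at hcon
    have hli : LinearIndependent Fq c := linearIndependent_iff_notMem_span.mpr hcon
    have := finrank_span_eq_card hli
    rw [Fintype.card_fin] at this
    rw [rankWeight] at hen
    omega
  obtain ⟨i₀, hi₀⟩ := hi₀
  -- find b outside C
  have hb : ∃ b : Fqm, b ∉ C := by
    by_contra hcon
    push_neg at hcon
    have : C = ⊤ := eq_top_iff.mpr fun y _ => hcon y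
    have : finrank Fq ↥C = m := by rw [this, finrank_top, hm]
    rw [rankWeight] at hen
    rw [← hC] at hen
    omega
  obtain ⟨b, hbC⟩ := hb
  have hb0 : b ≠ 0 := fun h => hbC (h ▸ C.zero_mem)
  set δ : Fin n → Fq := fun i => if i = i₀ then 1 else 0 with hδ
  set c' : Fin n → Fqm := fun i => c i + δ i • b with hc'
  have hcj : ∀ j, j ≠ i₀ → c' j = c j := by
    intro j hj; simp [hc', hδ, hj]
  have hci₀ : c' i₀ = c i₀ + b := by simp [hc', hδ]
  -- span of c'
  have hCle : C ≤ span Fq (range c') := by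
    rw [hC, span_le]
    rintro _ ⟨i, rfl⟩
    by_cases hii : i = i₀
    · subst hii
      have hle : span Fq (c '' (Set.univ \ {i})) ≤ span Fq (range c') := by
        rw [span_le]
        rintro _ ⟨j, hj, rfl⟩
        have hji : j ≠ i := by simpa using hj.2
        rw [← hcj j hji]
        exact subset_span ⟨j, rfl⟩
      exact hle hi₀
    · rw [← hcj i hii]
      exact subset_span ⟨i, rfl⟩
  have hbmem : b ∈ span Fq (range c') := by
    have h1 : c' i₀ ∈ span Fq (range c') := subset_span ⟨i₀, rfl⟩
    have h2 : c i₀ ∈ span Fq (range c') := hCle (subset_span ⟨i₀, rfl⟩)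
    have : c' i₀ - c i₀ = b := by rw [hci₀]; ring
    rw [← this]
    exact sub_mem h1 h2
  have hspan' : span Fq (range c') = C ⊔ span Fq {b} := by
    apply le_antisymm
    · rw [span_le]
      rintro _ ⟨i, rfl⟩
      exact add_mem (mem_sup_left (subset_span ⟨i, rfl⟩))
        (mem_sup_right (smul_mem _ _ (mem_span_singleton_self b)))
    · exact sup_le hCle ((span_singleton_le_iff_mem _ _).mpr hbmem)
  have hdisj : C ⊓ span Fq {b} = ⊥ := by
    rw [eq_bot_iff]
    rintro y ⟨hy1, hy2⟩
    obtain ⟨a, rfl⟩ := mem_span_singleton.mp hy2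
    rcases eq_or_ne a 0 with rfl | ha
    · simp
    · exfalso
      apply hbC
      have : b = a⁻¹ • (a • b) := by rw [smul_smul, inv_mul_cancel₀ ha, one_smul]
      rw [this]
      exact C.smul_mem _ hy1
  have hrank' : rankWeight Fq c' = rankWeight Fq c + 1 := by
    have h2 := Submodule.finrank_sup_add_finrank_inf_eq C (span Fq {b})
    rw [hdisj] at h2
    have e1 : rankWeight Fq c' = finrank Fq ↥(span Fq (range c')) := rfl
    have e2 : rankWeight Fq c = finrank Fq ↥C := rfl
    rw [e1, e2, hspan', finrank_span_singleton hb0] at *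
    simp only [finrank_bot] at h2
    omega
  refine ⟨c', hrank', ?_⟩
  -- construct complement H of span{b} containing C
  obtain ⟨W, hW⟩ := Submodule.exists_isCompl (C ⊔ span Fq {b})
  set H : Submodule Fq Fqm := C ⊔ W with hH
  have hbH : b ∉ H := by
    intro hbmemH
    rw [hH] at hbmemH
    obtain ⟨u, hu, w, hw, huw⟩ := mem_sup.mp hbmemH
    have hwmem : w ∈ (C ⊔ span Fq {b}) ⊓ W := by
      constructor
      · have : w = b - u := by rw [← huw]; ring
        rw [this]
        exact sub_mem (mem_sup_right (mem_span_singleton_self b)) (mem_sup_left hu)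
      · exact hw
    have : w = 0 := by
      have := hW.inf_eq_bot
      rw [this] at hwmem
      simpa using hwmem
    rw [this, add_zero] at huw
    exact hbC (huw ▸ hu)
  have hCH : C ≤ H := le_sup_left
  have hHtop : H ⊔ span Fq {b} = ⊤ := by
    rw [hH, sup_right_comm]
    exact hW.sup_eq_top
  have hxH : ∀ i, c i ∈ H := fun i => hCH (subset_span ⟨i, rfl⟩)
  -- the parametrization of Fqm^n by H-parts and b-coefficients
  set em : ((Fin n → H) × (Fin n → Fq)) → (Fin n → Fqm) :=
    fun p => fun i => (p.1 i : Fqm) + p.2 i • b with hem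
  have hinj : Function.Injective em := by
    rintro ⟨h1, α1⟩ ⟨h2, α2⟩ hh
    have hper : ∀ i, (((h1 i : Fqm) - h2 i) = 0) ∧ (α1 i - α2 i = 0) := by
      intro i
      have hhi : (h1 i : Fqm) + α1 i • b = (h2 i : Fqm) + α2 i • b := congrFun hh i
      have hz : ((h1 i : Fqm) - h2 i) + (α1 i - α2 i) • b = 0 := by
        rw [sub_smul]
        rw [sub_add_sub_comm, hhi, sub_self]
      exact helperB hbH (sub_mem (h1 i).2 (h2 i).2) hz
    simp only [Prod.mk.injEq]
    constructor
    · funext i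
      exact Subtype.ext (sub_eq_zero.mp (hper i).1)
    · funext i
      exact sub_eq_zero.mp (hper i).2
  have hsurj : Function.Surjective em := by
    intro x
    have hx : ∀ i, x i ∈ H ⊔ span Fq {b} := by
      intro i; rw [hHtop]; exact mem_top
    choose u hu v hv hadd using fun i => mem_sup.mp (hx i)
    choose a ha using fun i => mem_span_singleton.mp (hv i)
    refine ⟨(fun i => ⟨u i, hu i⟩, a), funext fun i => ?_⟩
    simp only [hem]
    rw [ha i, hadd i]
  letI : Fintype (Fin n → ↥H) := Fintype.ofFinite _
  set Q' : (Fin n → Fqm) → Prop :=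
    fun x => rankWeight Fq (x - c') ≤ ρ ∧ rankWeight Fq (x - 0) ≤ ρ with hQ'
  set Q : (Fin n → Fqm) → Prop :=
    fun x => rankWeight Fq (x - c) ≤ ρ ∧ rankWeight Fq (x - 0) ≤ ρ with hQ
  have key : ∀ h : Fin n → ↥H,
      Nat.card {α : Fin n → Fq // Q' (em (h, α))} ≤
        Nat.card {α : Fin n → Fq // Q (em (h, α))} := by
    intro h
    have hx1 : ∀ i, ((h i : Fqm)) ∈ H := fun i => (h i).2
    have hx2 : ∀ i, ((h i : Fqm) - c i) ∈ H := fun i => sub_mem (h i).2 (hxH i)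
    have e1 : ∀ α : Fin n → Fq, em (h, α) - c' =
        fun i => ((h i : Fqm) - c i) + (α - δ) i • b := by
      intro α; funext i
      simp only [hem, hc', Pi.sub_apply]
      rw [sub_smul]
      abel
    have e2 : ∀ α : Fin n → Fq, em (h, α) - 0 = fun i => ((h i : Fqm)) + α i • b := by
      intro α; funext i
      simp [hem]
    have e3 : ∀ α : Fin n → Fq, em (h, α) - c =
        fun i => ((h i : Fqm) - c i) + α i • b := by
      intro α; funext i
      simp only [hem, Pi.sub_apply]
      abel
    have eq1 : Nat.card {α : Fin n → Fq // Q' (em (h, α))} =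
        Nat.card {α : Fin n → Fq //
          (rankWeight Fq (fun i => ((h i : Fqm) - c i) + (α - δ) i • b) ≤ ρ) ∧
          (rankWeight Fq (fun i => ((h i : Fqm)) + α i • b) ≤ ρ)} := by
      refine Nat.card_congr (Equiv.subtypeEquivRight fun α => ?_)
      simp only [hQ', e1 α, e2 α]
    have eq2 : Nat.card {α : Fin n → Fq // Q (em (h, α))} =
        Nat.card {α : Fin n → Fq //
          (rankWeight Fq (fun i => ((h i : Fqm) - c i) + α i • b) ≤ ρ) ∧
          (rankWeight Fq (fun i => ((h i : Fqm)) + α i • b) ≤ ρ)} := by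
      refine Nat.card_congr (Equiv.subtypeEquivRight fun α => ?_)
      simp only [hQ, e3 α, e2 α]
    rw [eq1, eq2]
    exact card_shift_rank hbH _ _ hx1 hx2 δ
  have decomp : ∀ P : (Fin n → Fqm) → Prop,
      Nat.card {x : Fin n → Fqm // P x} =
        ∑ h : Fin n → ↥H, Nat.card {α : Fin n → Fq // P (em (h, α))} := by
    intro P
    have c1 : Nat.card {x : Fin n → Fqm // P x} =
        Nat.card {p : (Fin n → ↥H) × (Fin n → Fq) // P (em p)} :=
      (Nat.card_congr (Equiv.subtypeEquiv (Equiv.ofBijective em ⟨hinj, hsurj⟩)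
        fun p => Iff.rfl)).symm
    have c2 : Nat.card {p : (Fin n → ↥H) × (Fin n → Fq) // P (em p)} =
        Nat.card (Σ h : Fin n → ↥H, {α : Fin n → Fq // P (em (h, α))}) :=
      Nat.card_congr (Equiv.subtypeProdEquivSigmaSubtype fun h α => P (em (h, α)))
    rw [c1, c2]
    letI : ∀ h : Fin n → ↥H, Fintype {α : Fin n → Fq // P (em (h, α))} :=
      fun h => Fintype.ofFinite _
    simp [Nat.card_eq_fintype_card]
  show Nat.card {x : Fin n → Fqm // Q' x} ≤ Nat.card {x : Fin n → Fqm // Q x}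
  calc Nat.card {x : Fin n → Fqm // Q' x}
      = ∑ h : Fin n → ↥H, Nat.card {α : Fin n → Fq // Q' (em (h, α))} := decomp Q'
    _ ≤ ∑ h : Fin n → ↥H, Nat.card {α : Fin n → Fq // Q (em (h, α))} :=
        Finset.sum_le_sum fun h _ => key h
    _ = Nat.card {x : Fin n → Fqm // Q x} := (decomp Q).symm

lemma interVol_le {m : ℕ} (hm : Module.finrank Fq Fqm = m) (hnm : n ≤ m) {D : ℕ} (hD : D ≤ n) :
    ∀ (k : ℕ) (c : Fin n → Fqm), rankWeight Fq c ≤ D → D - rankWeight Fq c = k →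
      interVol Fq Fqm n ρ D ≤
        Nat.card {x : Fin n → Fqm //
          rankWeight Fq (x - c) ≤ ρ ∧ rankWeight Fq (x - 0) ≤ ρ} := by
  intro k
  induction k with
  | zero =>
    intro c hc h0
    apply Nat.sInf_le
    refine ⟨c, 0, ?_, rfl⟩
    rw [sub_zero]
    omega
  | succ k ih =>
    intro c hc h0
    have hlt : rankWeight Fq c < n := by omega
    obtain ⟨c', hrk, hle⟩ := step_lemma hm hnm c hlt
    exact le_trans (ih c' (by omega) (by omega)) hle

lemma low_vanish_weight {j : ℕ} (hj : j ≤ n) (x : Fin n → Fqm)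
    (hx : ∀ i : Fin n, (i : ℕ) < j → x i = 0) :
    rankWeight Fq x ≤ n - j := by
  set g : Fin (n - j) → Fqm := fun k => x ⟨j + (k : ℕ), by omega⟩ with hg
  have hle : span Fq (range x) ≤ span Fq (range g) := by
    rw [span_le]
    rintro _ ⟨i, rfl⟩
    by_cases hij : (i : ℕ) < j
    · rw [hx i hij]; exact zero_mem _
    · apply subset_span
      refine ⟨⟨(i : ℕ) - j, by omega⟩, ?_⟩
      simp only [hg]
      congr 1
      apply Fin.ext
      show j + ((i : ℕ) - j) = (i : ℕ)
      omega
  have h1 : rankWeight Fq x ≤ rankWeight Fq g := by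
    have e1 : rankWeight Fq x = finrank Fq ↥(span Fq (range x)) := rfl
    have e2 : rankWeight Fq g = finrank Fq ↥(span Fq (range g)) := rfl
    rw [e1, e2]; exact Submodule.finrank_mono hle
  have h2 := rw_add_ker (Fq := Fq) g
  omega

lemma exists_close_pair {q m j : ℕ} (hq : Fintype.card Fq = q)
    (hm : Module.finrank Fq Fqm = m) (hj : j ≤ n) (S : Finset (Fin n → Fqm))
    (hcard : q ^ (m * j) < S.card) :
    ∃ s ∈ S, ∃ t ∈ S, s ≠ t ∧ rankWeight Fq (t - s) ≤ n - j := by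
  classical
  have hcardFqm : Fintype.card Fqm = q ^ m := by
    have b := Module.finBasis Fq Fqm
    rw [Module.card_fintype b, hq, Fintype.card_fin, hm]
  have hmap : Fintype.card (Fin j → Fqm) = q ^ (m * j) := by
    rw [Fintype.card_fun, hcardFqm, Fintype.card_fin, ← pow_mul]
  obtain ⟨s, hs, t, ht, hst, heq⟩ :=
    Finset.exists_ne_map_eq_of_card_lt_of_maps_to (s := S)
      (t := (Finset.univ : Finset (Fin j → Fqm)))
      (f := fun c (i : Fin j) => c (Fin.castLE hj i))
      (by rw [Finset.card_univ, hmap]; exact hcard) (fun c _ => Finset.mem_univ _)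
  refine ⟨s, hs, t, ht, hst, low_vanish_weight hj _ ?_⟩
  intro i hi
  have h1 : s (Fin.castLE hj ⟨(i : ℕ), hi⟩) = t (Fin.castLE hj ⟨(i : ℕ), hi⟩) :=
    congrFun heq ⟨(i : ℕ), hi⟩
  have h2 : Fin.castLE hj ⟨(i : ℕ), hi⟩ = i := Fin.ext rfl
  rw [h2] at h1
  show t i - s i = 0
  rw [h1, sub_self]

lemma ncard_ball (t : Fin n → Fqm) :
    ({y : Fin n → Fqm | rankWeight Fq (y - t) ≤ ρ}).ncard =
      Nat.card {z : Fin n → Fqm // rankWeight Fq z ≤ ρ} := by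
  rw [← Nat.card_coe_set_eq]
  exact Nat.card_congr (Equiv.subtypeEquiv (Equiv.subRight t) fun y => Iff.rfl)

lemma card_inter_eq (s t : Fin n → Fqm) :
    (({y : Fin n → Fqm | rankWeight Fq (y - t) ≤ ρ} ∩
      {y : Fin n → Fqm | rankWeight Fq (y - s) ≤ ρ}) : Set (Fin n → Fqm)).ncard =
      Nat.card {x : Fin n → Fqm //
        rankWeight Fq (x - (t - s)) ≤ ρ ∧ rankWeight Fq (x - 0) ≤ ρ} := by
  rw [← Nat.card_coe_set_eq]
  refine Nat.card_congr (Equiv.subtypeEquiv (Equiv.subRight s) fun y => ?_)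
  simp only [Equiv.subRight_apply, Set.mem_inter_iff, Set.mem_setOf_eq,
    sub_sub_sub_cancel_right, sub_zero]

lemma union_bound {q m : ℕ} (hq : Fintype.card Fq = q) (hm : Module.finrank Fq Fqm = m)
    (hnm : n ≤ m) :
    ∀ K : ℕ, 1 ≤ K → K ≤ q ^ (m * n) → ∀ S : Finset (Fin n → Fqm), S.card = K →
    ({y : Fin n → Fqm | ∃ c ∈ S, rankWeight Fq (y - c) ≤ ρ}).ncard ≤
      Nat.card {z : Fin n → Fqm // rankWeight Fq z ≤ ρ} +
      (∑ a ∈ Finset.Icc 1 (Nat.log (q ^ m) K), (q ^ (a * m) - q ^ ((a - 1) * m)) *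
        (Nat.card {z : Fin n → Fqm // rankWeight Fq z ≤ ρ} -
          interVol Fq Fqm n ρ (n - a + 1))) +
      (K - q ^ (Nat.log (q ^ m) K * m)) *
        (Nat.card {z : Fin n → Fqm // rankWeight Fq z ≤ ρ} -
          interVol Fq Fqm n ρ (n - Nat.log (q ^ m) K)) := by
  intro K
  induction K with
  | zero => intro h1; omega
  | succ K ih =>
    intro _ hK2 S hS
    classical
    rcases Nat.eq_zero_or_pos K with rfl | hK1
    · -- base case : one ball
      obtain ⟨c, rfl⟩ := Finset.card_eq_one.mp hS
      have hset : {y : Fin n → Fqm | ∃ c' ∈ ({c} : Finset (Fin n → Fqm)),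
          rankWeight Fq (y - c') ≤ ρ} = {y : Fin n → Fqm | rankWeight Fq (y - c) ≤ ρ} := by
        ext y; simp
      rw [hset, ncard_ball c]
      simp [Nat.log_one_right]
    · -- inductive step
      have hq2 : 2 ≤ q := by rw [← hq]; exact Fintype.one_lt_card
      have hmn1 : 1 ≤ m * n := by
        by_contra hcon
        push_neg at hcon
        have hz : m * n = 0 := by omega
        rw [hz, pow_zero] at hK2; omega
      have hm1 : 1 ≤ m := by
        rcases Nat.eq_zero_or_pos m with rfl | h
        · simp at hmn1
        · exact h
      have hn1 : 1 ≤ n := by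
        rcases Nat.eq_zero_or_pos n with rfl | h
        · simp at hmn1
        · exact h
      have hb1 : 1 < q ^ m :=
        lt_of_lt_of_le one_lt_two (le_trans hq2 (Nat.le_self_pow (by omega) q))
      set j := Nat.log (q ^ m) K with hjdef
      have hjn : j < n := by
        rw [hjdef, Nat.log_lt_iff_lt_pow hb1 (by omega)]
        calc K < K + 1 := by omega
          _ ≤ q ^ (m * n) := hK2
          _ = (q ^ m) ^ n := by rw [← pow_mul]
      have hpow_le : q ^ (j * m) ≤ K := by
        have h := Nat.pow_log_le_self (q ^ m) (show K ≠ 0 by omega)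
        rw [← pow_mul] at h
        rw [mul_comm j m]
        rwa [hjdef]
      obtain ⟨s, hsS, t, htS, hst, hwts⟩ :=
        exists_close_pair hq hm (le_of_lt hjn) S (by rw [mul_comm m j]; omega)
      have hsub : {y : Fin n → Fqm | ∃ c ∈ S, rankWeight Fq (y - c) ≤ ρ} ⊆
          {y : Fin n → Fqm | ∃ c ∈ S.erase t, rankWeight Fq (y - c) ≤ ρ} ∪
          ({y : Fin n → Fqm | rankWeight Fq (y - t) ≤ ρ} \ {y : Fin n → Fqm | rankWeight Fq (y - s) ≤ ρ}) := by
        rintro y ⟨c, hc, hyc⟩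
        by_cases hct : c = t
        · subst hct
          by_cases hys : rankWeight Fq (y - s) ≤ ρ
          · exact Or.inl ⟨s, Finset.mem_erase.mpr ⟨hst, hsS⟩, hys⟩
          · exact Or.inr ⟨hyc, hys⟩
        · exact Or.inl ⟨c, Finset.mem_erase.mpr ⟨hct, hc⟩, hyc⟩
      have hdiff : ({y : Fin n → Fqm | rankWeight Fq (y - t) ≤ ρ} \ {y : Fin n → Fqm | rankWeight Fq (y - s) ≤ ρ}).ncard ≤
          Nat.card {z : Fin n → Fqm // rankWeight Fq z ≤ ρ} -
            interVol Fq Fqm n ρ (n - j) := by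
        have h1 := Set.ncard_inter_add_ncard_diff_eq_ncard
          {y : Fin n → Fqm | rankWeight Fq (y - t) ≤ ρ}
          {y : Fin n → Fqm | rankWeight Fq (y - s) ≤ ρ} (Set.toFinite _)
        have h2 := ncard_ball (Fq := Fq) (ρ := ρ) t
        have h3 : interVol Fq Fqm n ρ (n - j) ≤
            ({y : Fin n → Fqm | rankWeight Fq (y - t) ≤ ρ} ∩
             {y : Fin n → Fqm | rankWeight Fq (y - s) ≤ ρ}).ncard := by
          rw [card_inter_eq]
          exact interVol_le hm hnm (by omega) _ (t - s) hwts rfl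
        omega
      have hcardE : (S.erase t).card = K := by
        rw [Finset.card_erase_of_mem htS, hS]
        omega
      have hIH := ih hK1 (by omega) (S.erase t) hcardE
      have hstep : ({y : Fin n → Fqm | ∃ c ∈ S, rankWeight Fq (y - c) ≤ ρ}).ncard ≤
          (Nat.card {z : Fin n → Fqm // rankWeight Fq z ≤ ρ} +
          (∑ a ∈ Finset.Icc 1 j, (q ^ (a * m) - q ^ ((a - 1) * m)) *
            (Nat.card {z : Fin n → Fqm // rankWeight Fq z ≤ ρ} -
              interVol Fq Fqm n ρ (n - a + 1))) +
          (K - q ^ (j * m)) *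
            (Nat.card {z : Fin n → Fqm // rankWeight Fq z ≤ ρ} -
              interVol Fq Fqm n ρ (n - j))) +
          (Nat.card {z : Fin n → Fqm // rankWeight Fq z ≤ ρ} -
            interVol Fq Fqm n ρ (n - j)) := by
        calc ({y : Fin n → Fqm | ∃ c ∈ S, rankWeight Fq (y - c) ≤ ρ}).ncard
            ≤ ({y : Fin n → Fqm | ∃ c ∈ S.erase t, rankWeight Fq (y - c) ≤ ρ} ∪
               ({y : Fin n → Fqm | rankWeight Fq (y - t) ≤ ρ} \ {y : Fin n → Fqm | rankWeight Fq (y - s) ≤ ρ})).ncard :=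
              Set.ncard_le_ncard hsub (Set.toFinite _)
          _ ≤ ({y : Fin n → Fqm | ∃ c ∈ S.erase t, rankWeight Fq (y - c) ≤ ρ}).ncard +
              ({y : Fin n → Fqm | rankWeight Fq (y - t) ≤ ρ} \ {y : Fin n → Fqm | rankWeight Fq (y - s) ≤ ρ}).ncard :=
              Set.ncard_union_le _ _
          _ ≤ _ := add_le_add hIH hdiff
      -- now the arithmetic
      set V := Nat.card {z : Fin n → Fqm // rankWeight Fq z ≤ ρ} with hV
      set X := V - interVol Fq Fqm n ρ (n - j) with hX
      have hlog : Nat.log (q ^ m) (K + 1) = j ∨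
          (K + 1 = (q ^ m) ^ (j + 1) ∧ Nat.log (q ^ m) (K + 1) = j + 1) := by
        by_cases he : Nat.log (q ^ m) (K + 1) = j
        · exact Or.inl he
        · have h1 : j ≤ Nat.log (q ^ m) (K + 1) := Nat.log_mono_right (by omega)
          have h2 : j + 1 ≤ Nat.log (q ^ m) (K + 1) := by omega
          have h3 : (q ^ m) ^ (j + 1) ≤ K + 1 := by
            calc (q ^ m) ^ (j + 1) ≤ (q ^ m) ^ (Nat.log (q ^ m) (K + 1)) :=
                Nat.pow_le_pow_right (by omega) h2
              _ ≤ K + 1 := Nat.pow_log_le_self _ (by omega)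
          have h4 : K < (q ^ m) ^ (j + 1) := by
            have := Nat.lt_pow_succ_log_self hb1 K
            rwa [← hjdef] at this
          have he2 : K + 1 = (q ^ m) ^ (j + 1) := by omega
          refine Or.inr ⟨he2, ?_⟩
          rw [he2, Nat.log_pow hb1]
      rcases hlog with hl1 | ⟨he2, hl2⟩
      · rw [hl1]
        have harith : (K + 1 - q ^ (j * m)) * X = (K - q ^ (j * m)) * X + X := by
          rw [show K + 1 - q ^ (j * m) = (K - q ^ (j * m)) + 1 by omega, add_mul, one_mul]
        rw [harith]
        linarith [hstep]
      · rw [hl2]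
        have hA' : q ^ ((j + 1) * m) = (q ^ m) ^ (j + 1) := by
          rw [← pow_mul, mul_comm]
        have hzero : K + 1 - q ^ ((j + 1) * m) = 0 := by rw [hA']; omega
        rw [hzero, zero_mul, add_zero]
        rw [Finset.sum_Icc_succ_top (show 1 ≤ j + 1 by omega)]
        have hidx : n - (j + 1) + 1 = n - j := by omega
        have hone : j + 1 - 1 = j := by omega
        rw [hidx, hone]
        have harith : (q ^ ((j + 1) * m) - q ^ (j * m)) * X = (K - q ^ (j * m)) * X + X := by
          have : q ^ ((j + 1) * m) - q ^ (j * m) = (K - q ^ (j * m)) + 1 := by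
            rw [hA', ← he2]; omega
          rw [this, add_mul, one_mul]
        linarith [hstep, harith]

end helpers


/-- The volume of the union of any `K` balls of rank radius `ρ` in `GF(q^m)^n` is at most
`v(ρ) + Σ_{a=1}^{l} (q^{am} - q^{(a-1)m})[v(ρ) - I(ρ, n-a+1)] + (K - q^{lm})[v(ρ) - I(ρ, n-l)]`
with `l = ⌊log_{q^m} K⌋`. -/
theorem stmt13 (q m n ρ K l : ℕ) (Fq Fqm : Type*) [Field Fq] [Fintype Fq] [Field Fqm]
    [Fintype Fqm] [Algebra Fq Fqm] (hq : Fintype.card Fq = q)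
    (hm : Module.finrank Fq Fqm = m) (hnm : n ≤ m) (hρ : ρ ≤ n)
    (hK1 : 1 ≤ K) (hK2 : K ≤ q ^ (m * n)) (hl : l = Nat.log (q ^ m) K)
    (S : Finset (Fin n → Fqm)) (hS : S.card = K) :
    Nat.card {y : Fin n → Fqm | ∃ c ∈ S, rankWeight Fq (y - c) ≤ ρ} ≤
      Nat.card {z : Fin n → Fqm // rankWeight Fq z ≤ ρ} +
      (∑ a ∈ Finset.Icc 1 l, (q ^ (a * m) - q ^ ((a - 1) * m)) *
        (Nat.card {z : Fin n → Fqm // rankWeight Fq z ≤ ρ} -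
          interVol Fq Fqm n ρ (n - a + 1))) +
      (K - q ^ (l * m)) *
        (Nat.card {z : Fin n → Fqm // rankWeight Fq z ≤ ρ} -
          interVol Fq Fqm n ρ (n - l)) := by
  have h := union_bound (ρ := ρ) hq hm hnm K hK1 hK2 S hS
  rw [Nat.card_coe_set_eq]
  rw [hl]
  exact h
end

section
/- Let V be an m × n matrix over GF(q) and let r be the rank of the submatrix formed by its first ρ rows. Then there exist an r-subset I of the first ρ row indices and an r-subset J of column indices such that the r × r submatrix V(I, J) is invertible, and the matrix U defined by keeping the first ρ rows of V and setting row i (for i ≥ ρ) equal to V(i, J)·V(I, J)^{−1}·V(I, ·) satisfies: rank(U) = r, U agrees with V on the first ρ rows, and U agrees with V on all columns indexed by J. -/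
open Submodule Module Matrix

lemma aux15 {K M α : Type*} [Field K] [AddCommGroup M] [Module K M] [Fintype α] [DecidableEq α]
    (f : α → M) :
    ∃ s : Finset α, s.card = finrank K (span K (Set.range f)) ∧
      LinearIndependent K (fun i : s => f i) ∧
      span K (f '' s) = span K (Set.range f) := by
  obtain ⟨t, hts, hsp, hli⟩ := exists_linearIndependent K (Set.range f)
  have htfin : t.Finite := (Set.finite_range f).subset hts
  haveI := htfin.fintype
  have hex : ∀ x : t, ∃ a, f a = x := fun x => hts x.2
  choose g hg using hex
  have hginj : Function.Injective g := fun a b hab =>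
    Subtype.ext (by rw [← hg a, ← hg b, hab])
  have hmem : ∀ i ∈ Finset.univ.image g, f i ∈ t := by
    intro i hi
    obtain ⟨a, -, rfl⟩ := Finset.mem_image.mp hi
    rw [hg a]; exact a.2
  have hinj2 : ∀ i ∈ Finset.univ.image g, ∀ j ∈ Finset.univ.image g, f i = f j → i = j := by
    intro i hi j hj hij
    obtain ⟨a, -, rfl⟩ := Finset.mem_image.mp hi
    obtain ⟨b, -, rfl⟩ := Finset.mem_image.mp hj
    rw [hg a, hg b] at hij
    exact congrArg g (Subtype.ext hij)
  have himg : f '' (Finset.univ.image g : Finset α) = t := by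
    ext x
    constructor
    · rintro ⟨i, hi, rfl⟩
      exact hmem i (by simpa using hi)
    · intro hx
      exact ⟨g ⟨x, hx⟩, by simp, hg ⟨x, hx⟩⟩
  refine ⟨Finset.univ.image g, ?_, ?_, ?_⟩
  · rw [Finset.card_image_of_injective _ hginj, Finset.card_univ,
      ← hsp, finrank_span_set_eq_card hli, Set.toFinset_card]
  · have einj : Function.Injective (fun i : {i // i ∈ Finset.univ.image g} => (⟨f i, hmem i i.2⟩ : t)) := by
      intro i j hij
      exact Subtype.ext (hinj2 i i.2 j j.2 (congrArg Subtype.val hij))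
    exact hli.comp (fun i : {i // i ∈ Finset.univ.image g} => (⟨f i, hmem i i.2⟩ : t)) einj
  · rw [himg, hsp]

/-- If the first `ρ` rows of `V ∈ GF(q)^{m×n}` form a submatrix of rank `r`, then there are
an `r`-subset `I` of the first `ρ` row indices and an `r`-subset `J` of column indices with
`V(I,J)` invertible (i.e. the `r × r` submatrix has rank `r`), and a matrix `U` of rank `r`
agreeing with `V` on the first `ρ` rows and on all columns in `J`, each of whose rows lies
in the span of the rows of `V` indexed by `I`. -/
theorem stmt15 (q m n ρ r : ℕ) (Fq : Type*) [Field Fq] [Fintype Fq]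
    (hq : Fintype.card Fq = q) (hρ : ρ ≤ m) (hr : r ≤ ρ)
    (V : Matrix (Fin m) (Fin n) Fq)
    (hrank : (Matrix.of fun (i : Fin ρ) (j : Fin n) => V (Fin.castLE hρ i) j).rank = r) :
    ∃ (I : Finset (Fin m)) (J : Finset (Fin n)), I.card = r ∧ J.card = r ∧
      (∀ i ∈ I, (i : ℕ) < ρ) ∧
      (V.submatrix (fun i : I => (i : Fin m)) (fun j : J => (j : Fin n))).rank = r ∧
      ∃ U : Matrix (Fin m) (Fin n) Fq, U.rank = r ∧
        (∀ (i : Fin m) (j : Fin n), (i : ℕ) < ρ → U i j = V i j) ∧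
        (∀ (i : Fin m), ∀ j ∈ J, U i j = V i j) ∧
        (∀ i : Fin m, U i ∈ Submodule.span Fq {w : Fin n → Fq | ∃ k ∈ I, w = V k}) := by
  classical
  set W : Matrix (Fin ρ) (Fin n) Fq := Matrix.of fun (i : Fin ρ) (j : Fin n) => V (Fin.castLE hρ i) j with hW
  set f : Fin m → (Fin n → Fq) := fun i => if (i : ℕ) < ρ then V i else 0 with hf
  -- Step A : finrank of row space = r
  have hspanfW : span Fq (Set.range f) = span Fq (Set.range W) := by
    apply le_antisymm
    · rw [span_le]
      rintro x ⟨i, rfl⟩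
      by_cases h : (i : ℕ) < ρ
      · have : f i = W ⟨(i : ℕ), h⟩ := by
          simp only [hf, if_pos h, hW]
          ext j
          congr 1
        rw [this]
        exact subset_span ⟨_, rfl⟩
      · simp only [hf, if_neg h]
        exact Submodule.zero_mem _
    · rw [span_le]
      rintro x ⟨i, rfl⟩
      have : W i = f (Fin.castLE hρ i) := by
        have hlt : ((Fin.castLE hρ i : Fin m) : ℕ) < ρ := i.isLt
        simp only [hf, if_pos hlt]
        rfl
      rw [this]
      exact subset_span ⟨_, rfl⟩
  have hA : finrank Fq (span Fq (Set.range f)) = r := by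
    rw [hspanfW]; exact (Matrix.rank_eq_finrank_span_row W).symm.trans hrank
  -- Step B : pick rows I
  obtain ⟨I, hIcard, hIli, hIsp⟩ := aux15 (K := Fq) f
  rw [hA] at hIcard
  have hIlt : ∀ i ∈ I, (i : ℕ) < ρ := by
    intro i hi
    by_contra h
    have hne := hIli.ne_zero ⟨i, hi⟩
    simp only [hf, if_neg h] at hne
    exact hne rfl
  have hVIli : LinearIndependent Fq (fun i : I => V (i : Fin m)) := by
    have heq : (fun i : I => f (i : Fin m)) = fun i : I => V (i : Fin m) :=
      funext fun i => by simp only [hf, if_pos (hIlt i i.2)]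
    rwa [heq] at hIli
  have himgI : f '' ↑I = V '' ↑I :=
    Set.image_congr fun i hi => by simp only [hf, if_pos (hIlt i (Finset.mem_coe.mp hi))]
  have hspanI : span Fq (V '' ↑I) = span Fq (Set.range f) := by rw [← himgI]; exact hIsp
  have hfinI : finrank Fq (span Fq (V '' ↑I)) = r := by rw [hspanI, hA]
  -- Step C : pick columns J
  set R : Matrix I (Fin n) Fq := Matrix.of fun (k : I) (j : Fin n) => V (k : Fin m) j with hR
  have hRrank : R.rank = r := by
    rw [Matrix.rank_eq_finrank_span_row]
    have heq : Set.range R.row = Set.range (fun k : I => V (k : Fin m)) := rfl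
    rw [heq, finrank_span_eq_card hVIli, Fintype.card_coe, hIcard]
  set colf : Fin n → (I → Fq) := fun j k => V (k : Fin m) j with hcolf
  have hcolrank : finrank Fq (span Fq (Set.range colf)) = r := by
    have heq : Set.range colf = Set.range Rᵀ.row := rfl
    rw [heq, ← Matrix.rank_eq_finrank_span_row, Matrix.rank_transpose, hRrank]
  obtain ⟨J, hJcard, hJli, hJsp⟩ := aux15 (K := Fq) colf
  rw [hcolrank] at hJcard
  -- Step D : submatrix rank
  set A : Matrix I J Fq := V.submatrix (fun i : I => (i : Fin m)) (fun j : J => (j : Fin n)) with hAdef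
  have hAT : Aᵀ.rank = r := by
    rw [Matrix.rank_eq_finrank_span_row]
    have heq : Set.range Aᵀ.row = Set.range (fun j : J => colf (j : Fin n)) := rfl
    rw [heq, finrank_span_eq_card hJli, Fintype.card_coe, hJcard]
  have hArank : A.rank = r := by rw [← Matrix.rank_transpose, hAT]
  -- Step E : surjectivity
  have hsurj : Function.Surjective Aᵀ.mulVecLin := by
    rw [← LinearMap.range_eq_top]
    apply Submodule.eq_top_of_finrank_eq
    have h1 : finrank Fq (LinearMap.range Aᵀ.mulVecLin) = r := hAT
    have h2 : finrank Fq (J → Fq) = r := by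
      rw [Module.finrank_pi, Fintype.card_coe, hJcard]
    rw [h1, h2]
  choose co hco using fun i : Fin m => hsurj (fun j : J => V i (j : Fin n))
  -- Step F : define U
  set U : Matrix (Fin m) (Fin n) Fq :=
    Matrix.of fun i j => if (i : ℕ) < ρ then V i j
      else ∑ k : I, co i k * V (k : Fin m) j with hU
  have hU1 : ∀ (i : Fin m) (j : Fin n), (i : ℕ) < ρ → U i j = V i j := fun i j h => if_pos h
  have hUrow : ∀ i : Fin m, (i : ℕ) < ρ → U i = V i := fun i h => funext fun j => hU1 i j h
  have hUcomb : ∀ i : Fin m, ¬ (i : ℕ) < ρ →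
      U i = ∑ k : I, co i k • V (k : Fin m) := by
    intro i h
    funext j
    rw [show U i j = ∑ k : I, co i k * V (k : Fin m) j from if_neg h, Finset.sum_apply]
    simp only [Pi.smul_apply, smul_eq_mul]
  have hU2 : ∀ i : Fin m, ∀ j ∈ J, U i j = V i j := by
    intro i j hj
    by_cases h : (i : ℕ) < ρ
    · exact hU1 i j h
    · have hc := congrFun (hco i) ⟨j, hj⟩
      rw [show U i j = ∑ k : I, co i k * V (k : Fin m) j from if_neg h, ← hc]
      simp only [Matrix.mulVecLin_apply, Matrix.mulVec, dotProduct,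
        Matrix.transpose_apply, hAdef, Matrix.submatrix_apply]
      exact Finset.sum_congr rfl fun k _ => mul_comm _ _
  have hUspan : ∀ i : Fin m, U i ∈ span Fq (V '' ↑I) := by
    intro i
    by_cases h : (i : ℕ) < ρ
    · rw [hUrow i h, hspanI]
      have heq : V i = f i := by simp only [hf, if_pos h]
      rw [heq]
      exact subset_span ⟨i, rfl⟩
    · rw [hUcomb i h]
      exact Submodule.sum_mem _ fun k _ =>
        Submodule.smul_mem _ _ (subset_span ⟨k, Finset.mem_coe.mpr k.2, rfl⟩)
  have hUrank : U.rank = r := by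
    rw [Matrix.rank_eq_finrank_span_row]
    have hle1 : span Fq (Set.range U) ≤ span Fq (V '' ↑I) := by
      rw [span_le]; rintro x ⟨i, rfl⟩; exact hUspan i
    have hle2 : span Fq (V '' ↑I) ≤ span Fq (Set.range U) := by
      rw [span_le]
      rintro x ⟨k, hk, rfl⟩
      rw [show V k = U k from (hUrow k (hIlt k (Finset.mem_coe.mp hk))).symm]
      exact subset_span ⟨k, rfl⟩
    show finrank Fq (span Fq (Set.range U)) = r
    rw [le_antisymm hle1 hle2, hfinI]
  have hsetI : {w : Fin n → Fq | ∃ k ∈ I, w = V k} = V '' ↑I := by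
    ext w
    exact ⟨fun ⟨k, hk, h⟩ => ⟨k, hk, h.symm⟩, fun ⟨k, hk, h⟩ => ⟨k, hk, h.symm⟩⟩
  exact ⟨I, J, hIcard, hJcard, hIlt, hArank, U, hUrank, hU1, hU2,
    fun i => by rw [hsetI]; exact hUspan i⟩
end

section
/- The code C consisting of all m × n matrices over GF(q) whose first ρ rows are zero and which have at most n − ρ nonzero columns has rank covering radius at most ρ: for every V ∈ GF(q)^{m×n} there exists M ∈ C with rank(V − M) ≤ ρ. -/
/-- The code of `m × n` matrices over `GF(q)` with zero first `ρ` rows and at most `n - ρ`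
nonzero columns has rank covering radius at most `ρ`: every `V` is within rank distance `ρ`
of such a matrix. -/
theorem stmt16 (q m n ρ : ℕ) (Fq : Type*) [Field Fq] [Fintype Fq]
    (hq : Fintype.card Fq = q) (hρn : ρ ≤ n) (hnm : n ≤ m)
    (V : Matrix (Fin m) (Fin n) Fq) :
    ∃ M : Matrix (Fin m) (Fin n) Fq,
      (∀ (i : Fin m) (j : Fin n), (i : ℕ) < ρ → M i j = 0) ∧
      Nat.card {j : Fin n // ∃ i : Fin m, M i j ≠ 0} ≤ n - ρ ∧
      (V - M).rank ≤ ρ := by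
  classical
  have hρm : ρ ≤ m := hρn.trans hnm
  -- embedding of the first ρ row indices
  set emb : Fin ρ → Fin m := fun i => ⟨i.1, lt_of_lt_of_le i.2 hρm⟩ with hemb
  -- columns of the top ρ×n block of V
  set topcol : Fin n → (Fin ρ → Fq) := fun j i => V (emb i) j with htop
  obtain ⟨s, hs_sub, hs_span, hs_li⟩ := exists_linearIndependent Fq (Set.range topcol)
  haveI : Fintype ↥s := Fintype.ofFinite ↥s
  have hscard : Fintype.card ↥s ≤ ρ := by
    have h := hs_li.fintype_card_le_finrank
    rwa [Module.finrank_fintype_fun_eq_card, Fintype.card_fin] at h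
  -- pick an index for each element of s
  have hpick : ∀ v : ↥s, ∃ j : Fin n, topcol j = (v : Fin ρ → Fq) := fun v => hs_sub v.2
  choose pick hpick using hpick
  set J0 : Finset (Fin n) := Finset.univ.image pick with hJ0def
  have hJ0 : J0.card ≤ ρ := by
    refine le_trans Finset.card_image_le ?_
    simpa using hscard
  obtain ⟨J, hJ0J, hJcard⟩ := Finset.exists_superset_card_eq hJ0
    (by simpa [Fintype.card_fin] using hρn)
  -- every top column lies in the span of the top columns indexed by J
  have hspan : ∀ j, topcol j ∈
      Submodule.span Fq (Set.range fun k : ↥J => topcol (k : Fin n)) := by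
    intro j
    have h1 : topcol j ∈ Submodule.span Fq (Set.range topcol) :=
      Submodule.subset_span (Set.mem_range_self j)
    rw [← hs_span] at h1
    refine Submodule.span_le.mpr ?_ h1
    intro v hv
    apply Submodule.subset_span
    refine ⟨⟨pick ⟨v, hv⟩, hJ0J ?_⟩, hpick ⟨v, hv⟩⟩
    exact Finset.mem_image_of_mem pick (Finset.mem_univ _)
  have hcoef : ∀ j, ∃ cf : ↥J → Fq,
      (∑ k : ↥J, cf k • topcol (k : Fin n)) = topcol j := by
    intro j
    exact (Submodule.mem_span_range_iff_exists_fun Fq).mp (hspan j)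
  choose c hc using hcoef
  -- coefficients: delta on J, chosen coefficients off J
  set coefJ : Fin n → ↥J → Fq := fun j k =>
    if j ∈ J then (if (k : Fin n) = j then 1 else 0) else c j k with hcoefJ
  have e : Fin ρ ≃ ↥J := (Fintype.equivFinOfCardEq (by rw [Fintype.card_coe, hJcard])).symm
  set B : Matrix (Fin m) (Fin ρ) Fq := fun i a => V i ((e a) : Fin n) with hB
  set C : Matrix (Fin ρ) (Fin n) Fq := fun a j => coefJ j (e a) with hC
  set M : Matrix (Fin m) (Fin n) Fq := V - B * C with hM
  have key : ∀ (j : Fin n) (i : Fin m),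
      (B * C) i j = ∑ k : ↥J, coefJ j k * V i (k : Fin n) := by
    intro j i
    rw [Matrix.mul_apply]
    rw [← Equiv.sum_comp e (fun k => coefJ j k * V i (k : Fin n))]
    simp [hB, hC, mul_comm]
  have keyJ : ∀ j ∈ J, ∀ i : Fin m, (B * C) i j = V i j := by
    intro j hj i
    rw [key]
    have h2 : ∀ k : ↥J, coefJ j k * V i (k : Fin n)
        = if k = (⟨j, hj⟩ : ↥J) then V i j else 0 := by
      intro k
      by_cases hk : k = (⟨j, hj⟩ : ↥J)
      · subst hk; simp [hcoefJ, hj]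
      · have : (k : Fin n) ≠ j := fun h => hk (Subtype.ext h)
        simp [hcoefJ, hj, this, hk]
    rw [Finset.sum_congr rfl fun k _ => h2 k]
    simp
  have keyTop : ∀ j ∉ J, ∀ i' : Fin ρ, (B * C) (emb i') j = V (emb i') j := by
    intro j hj i'
    rw [key]
    have h3 := congrFun (hc j) i'
    simp only [Finset.sum_apply, Pi.smul_apply, smul_eq_mul] at h3
    calc ∑ k : ↥J, coefJ j k * V (emb i') (k : Fin n)
        = ∑ k : ↥J, c j k * topcol (k : Fin n) i' := by
          refine Finset.sum_congr rfl fun k _ => ?_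
          simp [hcoefJ, hj, htop]
      _ = topcol j i' := h3
      _ = V (emb i') j := rfl
  refine ⟨M, ?_, ?_, ?_⟩
  · -- first ρ rows vanish
    intro i j hi
    have hie : i = emb ⟨i.1, hi⟩ := by ext; rfl
    by_cases hj : j ∈ J
    · simp [hM, Matrix.sub_apply, keyJ j hj i]
    · rw [hie]
      simp [hM, Matrix.sub_apply, keyTop j hj ⟨i.1, hi⟩]
  · -- at most n - ρ nonzero columns
    have hsub : {j : Fin n | ∃ i : Fin m, M i j ≠ 0} ⊆ (↑(Jᶜ) : Set (Fin n)) := by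
      intro j hj
      simp only [Finset.coe_compl, Set.mem_compl_iff, Finset.mem_coe]
      intro hjJ
      obtain ⟨i, hi⟩ := hj
      exact hi (by simp [hM, Matrix.sub_apply, keyJ j hjJ i])
    calc Nat.card {j : Fin n // ∃ i : Fin m, M i j ≠ 0}
        = Set.ncard {j : Fin n | ∃ i : Fin m, M i j ≠ 0} :=
          (Nat.card_coe_set_eq _)
      _ ≤ Set.ncard (↑(Jᶜ) : Set (Fin n)) := Set.ncard_le_ncard hsub (Set.toFinite _)
      _ = (Jᶜ).card := Set.ncard_coe_finset _
      _ = n - ρ := by rw [Finset.card_compl, hJcard, Fintype.card_fin]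
  · -- rank bound
    have hVM : V - M = B * C := by simp [hM]
    rw [hVM]
    exact le_trans (Matrix.rank_mul_le_right B C)
      (by simpa using (Matrix.rank_le_card_height C))
end

section
/- Upper bound on the minimal size of a rank-covering code: K_R(q^m, n, ρ) ≤ Σ_{i=0}^{n−ρ} (n choose i)·(q^{m−ρ} − 1)^i, where K_R(q^m, n, ρ) is the minimum cardinality of a subset of GF(q^m)^n with rank covering radius at most ρ. -/
open Module Submodule Finset in
private lemma count_aux {α β : Type*} [Fintype α] [DecidableEq α] [DecidableEq β] [Zero β]
    (V0 : Finset β) (r : ℕ) :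
    ((Finset.univ.powerset.filter (fun s : Finset α => s.card ≤ r)).biUnion
      (fun s => (s.pi (fun _ => V0)).image (fun f j => if h : j ∈ s then f j h else 0))).card
      ≤ ∑ i ∈ Finset.range (r + 1), (Fintype.card α).choose i * V0.card ^ i := by
  classical
  refine (Finset.card_biUnion_le).trans ?_
  have h1 : ∀ s : Finset α,
      ((s.pi (fun _ => V0)).image (fun f j => if h : j ∈ s then f j h else 0)).card
        ≤ V0.card ^ s.card := by
    intro s
    refine Finset.card_image_le.trans ?_
    rw [Finset.card_pi, Finset.prod_const]
  refine le_trans (Finset.sum_le_sum fun s _ => h1 s) ?_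
  have h2 : (Finset.univ.powerset.filter (fun s : Finset α => s.card ≤ r))
      = (Finset.range (r + 1)).biUnion (fun i => Finset.powersetCard i Finset.univ) := by
    ext s
    simp [Finset.mem_powersetCard, Nat.lt_succ_iff]
  rw [h2, Finset.sum_biUnion]
  · refine Finset.sum_le_sum fun i _ => ?_
    have : ∀ s ∈ Finset.powersetCard i (Finset.univ : Finset α),
        V0.card ^ s.card = V0.card ^ i := by
      intro s hs
      rw [(Finset.mem_powersetCard.1 hs).2]
    rw [Finset.sum_congr rfl this, Finset.sum_const, Finset.card_powersetCard,
      Finset.card_univ, smul_eq_mul]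
  · intro i _ j _ hij
    simp only [Function.onFun, Finset.disjoint_left]
    intro s hsi hsj
    rw [Finset.mem_powersetCard] at hsi hsj
    exact hij (hsi.2 ▸ hsj.2)


open Module Submodule Finset

/-- Upper bound on the minimal size of a rank-covering code:
`K_R(q^m, n, ρ) ≤ Σ_{i=0}^{n-ρ} (n choose i)(q^{m-ρ} - 1)^i`. -/
theorem stmt17 (q m n ρ : ℕ) (Fq Fqm : Type*) [Field Fq] [Fintype Fq] [Field Fqm]
    [Fintype Fqm] [Algebra Fq Fqm] (hq : Fintype.card Fq = q)
    (hm : Module.finrank Fq Fqm = m) (hρn : ρ ≤ n) (hnm : n ≤ m) :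
    sInf {k | ∃ C : Finset (Fin n → Fqm), C.card = k ∧
        ∀ x : Fin n → Fqm, ∃ c ∈ C, rankWeight Fq (x - c) ≤ ρ} ≤
      ∑ i ∈ Finset.range (n - ρ + 1), n.choose i * (q ^ (m - ρ) - 1) ^ i := by
  classical
  haveI : FiniteDimensional Fq Fqm := Module.Finite.of_finite
  have hρm : ρ ≤ m := hρn.trans hnm
  let b : Basis (Fin m) Fq Fqm := finBasisOfFinrankEq Fq Fqm hm
  -- the subspace V spanned by the high basis vectors (indices ≥ ρ)
  let e : Fin (m - ρ) → Fin m := fun i => ⟨ρ + i, by omega⟩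
  have he : Function.Injective e := by
    intro a a' h
    have : ρ + (a : ℕ) = ρ + (a' : ℕ) := congrArg Fin.val h
    exact Fin.ext (by omega)
  set V : Submodule Fq Fqm := Submodule.span Fq (Set.range (b ∘ e)) with hVdef
  have hVrank : finrank Fq V = m - ρ := by
    rw [hVdef, finrank_span_eq_card (b.linearIndependent.comp e he), Fintype.card_fin]
  have hbV : ∀ i : Fin m, ρ ≤ (i : ℕ) → b i ∈ V := by
    intro i hi
    apply subset_span
    refine ⟨⟨(i : ℕ) - ρ, by omega⟩, ?_⟩
    show b (e _) = b i
    congr 1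
    exact Fin.ext (by simp [e]; omega)
  -- the subspace L spanned by the low basis vectors (indices < ρ)
  let eL : Fin ρ → Fin m := fun i => ⟨i, by omega⟩
  have heL : Function.Injective eL := by
    intro a a' h
    simpa [eL, Fin.ext_iff] using h
  set L : Submodule Fq Fqm := Submodule.span Fq (Set.range (b ∘ eL)) with hLdef
  have hLrank : finrank Fq L = ρ := by
    rw [hLdef, finrank_span_eq_card (b.linearIndependent.comp eL heL), Fintype.card_fin]
  have hbL : ∀ i : Fin m, (i : ℕ) < ρ → b i ∈ L := by
    intro i hi
    apply subset_span
    refine ⟨⟨(i : ℕ), hi⟩, ?_⟩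
    show b (eL _) = b i
    congr 1
  -- the projection onto the low part
  let lows : Finset (Fin m) := Finset.univ.filter (fun i => (i : ℕ) < ρ)
  let π : Fqm →ₗ[Fq] Fqm :=
    { toFun := fun y => ∑ i ∈ lows, b.repr y i • b i
      map_add' := fun y z => by simp [map_add, add_smul, Finset.sum_add_distrib]
      map_smul' := fun a y => by simp [map_smul, mul_smul, Finset.smul_sum] }
  have hπdef : ∀ y : Fqm, π y = ∑ i ∈ lows, b.repr y i • b i := fun _ => rfl
  have hsub : ∀ y : Fqm, y - π y ∈ V := by
    intro y
    have hy : (∑ i ∈ lows, b.repr y i • b i) +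
        ∑ i ∈ Finset.univ.filter (fun i : Fin m => ¬ (i : ℕ) < ρ), b.repr y i • b i = y := by
      rw [Finset.sum_filter_add_sum_filter_not]
      exact b.sum_repr y
    have h2 : y - π y
        = ∑ i ∈ Finset.univ.filter (fun i : Fin m => ¬ (i : ℕ) < ρ), b.repr y i • b i := by
      rw [hπdef]
      exact sub_eq_of_eq_add' hy.symm
    rw [h2]
    exact Submodule.sum_mem _ fun i hi =>
      Submodule.smul_mem _ _ (hbV i (by simpa using (Finset.mem_filter.1 hi).2))
  have hker : ∀ y : Fqm, π y = 0 → y ∈ V := by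
    intro y h
    have := hsub y
    rwa [h, sub_zero] at this
  have hπL : ∀ y : Fqm, π y ∈ L := by
    intro y
    rw [hπdef]
    exact Submodule.sum_mem _ fun i hi =>
      Submodule.smul_mem _ _ (hbL i (by simpa [lows] using hi))
  -- the code
  have hcardV : Fintype.card V = q ^ (m - ρ) := by
    rw [card_eq_pow_finrank (K := Fq) (V := V), hq, hVrank]
  let V0 : Finset Fqm := (Finset.univ.filter (fun y : Fqm => y ∈ V)).erase 0
  have hV0card : V0.card = q ^ (m - ρ) - 1 := by
    have h0 : (0 : Fqm) ∈ Finset.univ.filter (fun y : Fqm => y ∈ V) := by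
      simp [V.zero_mem]
    rw [Finset.card_erase_of_mem h0]
    congr 1
    rw [← hcardV]
    exact (Fintype.card_subtype _).symm
  have hV0mem : ∀ y : Fqm, y ∈ V0 ↔ y ∈ V ∧ y ≠ 0 := by
    intro y
    simp [V0, and_comm]
  let A : Finset (Fin n) → Finset (Fin n → Fqm) := fun s =>
    (s.pi (fun _ => V0)).image (fun f j => if h : j ∈ s then f j h else 0)
  let P : Finset (Finset (Fin n)) :=
    Finset.univ.powerset.filter (fun s : Finset (Fin n) => s.card ≤ n - ρ)
  let C : Finset (Fin n → Fqm) := P.biUnion A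
  have hCcard : C.card ≤ ∑ i ∈ Finset.range (n - ρ + 1), n.choose i * (q ^ (m - ρ) - 1) ^ i := by
    have := count_aux (α := Fin n) (β := Fqm) V0 (n - ρ)
    rwa [Fintype.card_fin, hV0card] at this
  -- the covering property
  have hcover : ∀ x : Fin n → Fqm, ∃ c ∈ C, rankWeight Fq (x - c) ≤ ρ := by
    intro x
    obtain ⟨s, hs_ind, hs_max⟩ := exists_maximal_linearIndepOn Fq (fun j : Fin n => π (x j))
    have hsfin : s.Finite := Set.toFinite s
    haveI : Fintype s := hsfin.fintype
    -- |s| ≤ ρ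
    have hLind : LinearIndependent Fq (fun j : s => (⟨π (x j), hπL _⟩ : L)) := by
      apply LinearIndependent.of_comp L.subtype
      exact hs_ind
    have hscard : hsfin.toFinset.card ≤ ρ := by
      have h1 := hLind.fintype_card_le_finrank
      rw [hLrank] at h1
      rwa [Set.Finite.card_toFinset]
    obtain ⟨T, hsT, -, hTcard⟩ :=
      Finset.exists_subsuperset_card_eq (hsfin.toFinset.subset_univ) hscard
        (by rw [Finset.card_univ, Fintype.card_fin]; exact hρn)
    let W : Submodule Fq Fqm := Submodule.span Fq ((T.image x : Finset Fqm) : Set Fqm)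
    have hxW : ∀ j ∈ T, x j ∈ W := fun j hj =>
      subset_span (by simpa using ⟨j, hj, rfl⟩)
    have hWrank : finrank Fq W ≤ ρ := by
      refine le_trans (finrank_span_finset_le_card _) ?_
      exact le_trans Finset.card_image_le (le_of_eq hTcard)
    have hπW : ∀ j : Fin n, j ∉ T → π (x j) ∈ Submodule.map π W := by
      intro j hj
      have hjs : j ∉ s := fun h => hj (hsT (hsfin.mem_toFinset.2 h))
      obtain ⟨a, ha, hmem⟩ := hs_max j hjs
      have hspan : Submodule.span Fq ((fun j : Fin n => π (x j)) '' s) ≤ Submodule.map π W := by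
        rw [Submodule.span_le]
        rintro z ⟨i, hi, rfl⟩
        exact ⟨x i, hxW i (hsT (hsfin.mem_toFinset.2 hi)), rfl⟩
      have : π (x j) = a⁻¹ • (a • π (x j)) := by
        rw [smul_smul, inv_mul_cancel₀ ha, one_smul]
      rw [this]
      exact Submodule.smul_mem _ _ (hspan hmem)
    have hWex : ∀ j : Fin n, ∃ w, w ∈ W ∧ π w = π (x j) ∧ (j ∈ T → w = x j) := by
      intro j
      by_cases hj : j ∈ T
      · exact ⟨x j, hxW j hj, rfl, fun _ => rfl⟩
      · obtain ⟨w, hwW, hwπ⟩ := hπW j hj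
        exact ⟨w, hwW, hwπ, fun h => absurd h hj⟩
    choose w hw1 hw2 hw3 using hWex
    set c : Fin n → Fqm := fun j => x j - w j with hcdef
    have hcV : ∀ j, c j ∈ V := by
      intro j
      apply hker
      rw [hcdef]
      simp [map_sub, hw2 j]
    have hcT : ∀ j ∈ T, c j = 0 := by
      intro j hj
      simp [hcdef, hw3 j hj]
    refine ⟨c, ?_, ?_⟩
    · -- c ∈ C
      let S : Finset (Fin n) := Finset.univ.filter (fun j => c j ≠ 0)
      have hST : S ⊆ Tᶜ := by
        intro j hj
        rw [Finset.mem_compl]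
        intro hjT
        exact (Finset.mem_filter.1 hj).2 (hcT j hjT)
      have hSP : S ∈ P := by
        refine Finset.mem_filter.2 ⟨Finset.mem_powerset.2 (Finset.subset_univ _), ?_⟩
        refine le_trans (Finset.card_le_card hST) ?_
        rw [Finset.card_compl, hTcard, Fintype.card_fin]
      refine Finset.mem_biUnion.2 ⟨S, hSP, ?_⟩
      refine Finset.mem_image.2 ⟨fun j _ => c j, ?_, ?_⟩
      · refine Finset.mem_pi.2 fun j hj => ?_
        exact (hV0mem (c j)).2 ⟨hcV j, (Finset.mem_filter.1 hj).2⟩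
      · funext j
        by_cases hj : j ∈ S
        · simp [hj]
        · have : c j = 0 := by
            by_contra hne
            exact hj (Finset.mem_filter.2 ⟨Finset.mem_univ _, hne⟩)
          simp [hj, this]
    · -- rank weight bound
      have hspan : Submodule.span Fq (Set.range (x - c)) ≤ W := by
        rw [Submodule.span_le]
        rintro z ⟨j, rfl⟩
        have : (x - c) j = w j := by
          simp [hcdef]
        rw [this]
        exact hw1 j
      calc rankWeight Fq (x - c) ≤ finrank Fq W := Submodule.finrank_mono hspan
        _ ≤ ρ := hWrank
  refine le_trans (Nat.sInf_le ⟨C, rfl, hcover⟩) hCcard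
end

section
/- Lower bound via counting inequalities: let C ⊆ GF(q^m)^n be a code with rank covering radius ρ, let u be any vector at rank distance δ from C (0 ≤ δ ≤ ρ), and let A_i be the number of codewords at rank distance i from u. Then A_i = 0 for i < δ, A_δ ≥ 1, A_i ≤ N_i for all i (where N_i is the number of vectors of rank i), Σ_i A_i = |C|, and for every 0 ≤ r ≤ n: Σ_{i=0}^{n} A_i · Σ_{s=0}^{ρ} J(r, s, i) ≥ N_r, where J(r, s, i) is the number of vectors at rank distance r from u and rank distance s from a fixed vector at rank distance i from u. -/
/-- The Gaussian binomial coefficient `[n choose r]_q`: the number of `r`-dimensional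
subspaces of `GF(q)^n`. -/
noncomputable def qBinom (Fq : Type*) [Field Fq] (n r : ℕ) : ℕ :=
  Nat.card {W : Submodule Fq (Fin n → Fq) // Module.finrank Fq W = r}

open Module Submodule Finset

section Counting

variable {K W : Type*} [Field K] [Fintype K] [AddCommGroup W] [Module K W] [Fintype W]

lemma card_li (r : ℕ) :
    Nat.card {v : Fin r → W // LinearIndependent K v} =
      ∏ j ∈ Finset.range r, (Fintype.card W - Fintype.card K ^ j) := by
  classical
  induction r with
  | zero =>
      rw [Finset.range_zero, Finset.prod_empty, Nat.card_eq_one_iff_unique]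
      exact ⟨⟨fun a b => Subtype.ext (funext fun i => i.elim0)⟩,
        ⟨⟨fun i => i.elim0, linearIndependent_empty_type⟩⟩⟩
  | succ r ih =>
      have e : {p : (Fin r → W) × W //
            LinearIndependent K p.1 ∧ p.2 ∉ span K (Set.range p.1)}
          ≃ {v : Fin (r+1) → W // LinearIndependent K v} :=
        Equiv.subtypeEquiv
          ⟨fun p => Fin.snoc p.1 p.2, fun v => (Fin.init v, v (Fin.last r)),
            by rintro ⟨v, w⟩; simp, by intro v; simp [Fin.snoc_init_self]⟩
          (fun p => linearIndependent_fin_snoc.symm)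
      rw [← Nat.card_congr e,
        Nat.card_congr (Equiv.subtypeProdEquivSigmaSubtype
          (fun (v : Fin r → W) (w : W) => LinearIndependent K v ∧ w ∉ span K (Set.range v))),
        Nat.card_eq_fintype_card, Fintype.card_sigma]
      have hterm : ∀ v : Fin r → W,
          Fintype.card {w : W // LinearIndependent K v ∧ w ∉ span K (Set.range v)} =
            if LinearIndependent K v then Fintype.card W - Fintype.card K ^ r else 0 := by
        intro v
        by_cases hv : LinearIndependent K v
        · rw [if_pos hv]
          have e2 : {w : W // LinearIndependent K v ∧ w ∉ span K (Set.range v)} ≃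
              {w : W // ¬ w ∈ span K (Set.range v)} :=
            Equiv.subtypeEquiv (Equiv.refl W) (fun w => by simp [hv])
          rw [Fintype.card_congr e2, Fintype.card_subtype_compl]
          congr 1
          have hfr : finrank K (span K (Set.range v)) = r := by
            rw [finrank_span_eq_card hv, Fintype.card_fin]
          have : Fintype.card {w : W // w ∈ span K (Set.range v)} =
              Fintype.card (span K (Set.range v)) := Fintype.card_congr (Equiv.refl _)
          rw [this, card_eq_pow_finrank (K := K), hfr]
        · rw [if_neg hv, Fintype.card_eq_zero_iff]
          exact ⟨fun w => hv w.2.1⟩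
      rw [Finset.sum_congr rfl (fun v _ => hterm v), ← Finset.sum_filter,
        Finset.sum_const, smul_eq_mul, Finset.prod_range_succ, ← ih,
        Nat.card_eq_fintype_card, Fintype.card_subtype]

lemma card_inj (T : Type*) [AddCommGroup T] [Module K T] [Module.Finite K T]
    (r : ℕ) (hT : finrank K T = r) :
    Nat.card {g : T →ₗ[K] W // Function.Injective g} =
      ∏ j ∈ Finset.range r, (Fintype.card W - Fintype.card K ^ j) := by
  classical
  let b : Basis (Fin r) K T := finBasisOfFinrankEq K T hT
  have hiff : ∀ v : Fin r → W, LinearIndependent K v ↔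
      Function.Injective ((b.constr (S := K)) v) := by
    intro v
    constructor
    · intro hv
      rw [← LinearMap.ker_eq_bot, LinearMap.ker_eq_bot']
      intro x hx
      rw [Basis.constr_apply_fintype] at hx
      have h0 : ∀ i, b.equivFun x i = 0 :=
        Fintype.linearIndependent_iff.mp hv _ hx
      have : b.equivFun x = 0 := funext h0
      have := congrArg b.equivFun.symm this
      rwa [LinearEquiv.symm_apply_apply, map_zero] at this
    · intro hg
      have : LinearIndependent K (((b.constr (S := K)) v) ∘ b) :=
        b.linearIndependent.map' _ (LinearMap.ker_eq_bot.mpr hg)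
      have hcb : (((b.constr (S := K)) v) ∘ b) = v :=
        funext fun i => b.constr_basis K v i
      rwa [hcb] at this
  rw [← card_li (K := K) (W := W) r]
  exact (Nat.card_congr (Equiv.subtypeEquiv ((b.constr (S := K) (M' := W)).toEquiv) hiff)).symm


/-- Equivalence between maps with fixed kernel and injective maps from the quotient. -/
def kerFiberEquiv {V : Type*} [AddCommGroup V] [Module K V] (p : Submodule K V) :
    {f : V →ₗ[K] W // LinearMap.ker f = p} ≃
      {g : (V ⧸ p) →ₗ[K] W // Function.Injective g} where
  toFun f := ⟨p.liftQ f.1 f.2.ge, by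
    rw [← LinearMap.ker_eq_bot, Submodule.ker_liftQ, f.2, Submodule.mkQ_map_self]⟩
  invFun g := ⟨g.1.comp p.mkQ, by
    rw [LinearMap.ker_comp, LinearMap.ker_eq_bot.mpr g.2, Submodule.comap_bot,
      Submodule.ker_mkQ]⟩
  left_inv f := Subtype.ext (Submodule.liftQ_mkQ _ _ _)
  right_inv g := Subtype.ext (Submodule.linearMap_qext p (Submodule.liftQ_mkQ _ _ _))

lemma card_rank_maps (n r : ℕ) (hr : r ≤ n) :
    Nat.card {f : (Fin n → K) →ₗ[K] W // finrank K (LinearMap.range f) = r} =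
      Nat.card {p : Submodule K (Fin n → K) // finrank K p = n - r} *
        ∏ j ∈ Finset.range r, (Fintype.card W - Fintype.card K ^ j) := by
  classical
  set V := (Fin n → K)
  have hV : finrank K V = n := Module.finrank_fin_fun K
  haveI : Finite (Submodule K V) :=
    Finite.of_injective (fun p => (p : Set V)) SetLike.coe_injective
  haveI : Fintype (Submodule K V) := Fintype.ofFinite _
  haveI : Finite (V →ₗ[K] W) :=
    Finite.of_injective (fun f => (f : V → W)) DFunLike.coe_injective
  -- rank condition vs kernel condition
  have hcond : ∀ f : V →ₗ[K] W,
      finrank K (LinearMap.range f) = r ↔ finrank K (LinearMap.ker f) = n - r := by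
    intro f
    have := LinearMap.finrank_range_add_finrank_ker f
    rw [hV] at this
    omega
  rw [Nat.card_congr (Equiv.subtypeEquiv (Equiv.refl (V →ₗ[K] W))
    (q := fun f => finrank K (LinearMap.ker f) = n - r) hcond)]
  -- fiber over the kernel
  set β := {p : Submodule K V // finrank K p = n - r}
  set α := {f : V →ₗ[K] W // finrank K (LinearMap.ker f) = n - r}
  have hfib : ∀ b : β, Nat.card {a : α // LinearMap.ker a.1 = b.1} =
      ∏ j ∈ Finset.range r, (Fintype.card W - Fintype.card K ^ j) := by
    intro b
    have e1 : {a : α // LinearMap.ker a.1 = b.1} ≃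
        {f : V →ₗ[K] W // LinearMap.ker f = b.1} :=
      Equiv.subtypeSubtypeEquivSubtype
        (p := fun f : V →ₗ[K] W => finrank K (LinearMap.ker f) = n - r)
        (q := fun f : V →ₗ[K] W => LinearMap.ker f = b.1)
        (fun {f} hf => by
          have hf' : LinearMap.ker f = b.1 := hf
          show finrank K (LinearMap.ker f) = n - r
          rw [hf']; exact b.2)
    have hfrq : finrank K (V ⧸ b.1) = r := by
      have := Submodule.finrank_quotient_add_finrank b.1
      rw [hV, b.2] at this
      omega
    rw [Nat.card_congr e1, Nat.card_congr (kerFiberEquiv b.1),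
      card_inj (V ⧸ b.1) r hfrq]
  have e2 : α ≃ Σ b : β, {a : α // (⟨LinearMap.ker a.1, a.2⟩ : β) = b} :=
    (Equiv.sigmaFiberEquiv (fun a : α => (⟨LinearMap.ker a.1, a.2⟩ : β))).symm
  haveI : Fintype α := Fintype.ofFinite _
  haveI : Fintype β := Fintype.ofFinite _
  haveI : ∀ b : β, Fintype {a : α // (⟨LinearMap.ker a.1, a.2⟩ : β) = b} :=
    fun b => Fintype.ofFinite _
  rw [Nat.card_congr e2, Nat.card_eq_fintype_card, Fintype.card_sigma]
  have : ∀ b : β, Fintype.card {a : α // (⟨LinearMap.ker a.1, a.2⟩ : β) = b} =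
      ∏ j ∈ Finset.range r, (Fintype.card W - Fintype.card K ^ j) := by
    intro b
    rw [← Nat.card_eq_fintype_card, ← hfib b]
    exact Nat.card_congr (Equiv.subtypeEquiv (Equiv.refl α)
      (fun a => Subtype.ext_iff))
  rw [Finset.sum_congr rfl (fun b _ => this b), Finset.sum_const, smul_eq_mul,
    Nat.card_eq_fintype_card (α := β), Finset.card_univ]


lemma card_subspaces_dual (n r : ℕ) (hr : r ≤ n) :
    Nat.card {p : Submodule K (Fin n → K) // finrank K p = n - r} =
      Nat.card {p : Submodule K (Fin n → K) // finrank K p = r} := by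
  classical
  set V := (Fin n → K)
  have hV : finrank K V = n := Module.finrank_fin_fun K
  have hdual : finrank K (Module.Dual K V) = n := by
    rw [Subspace.dual_finrank_eq, hV]
  have hann : ∀ p : Submodule K V, finrank K p.dualAnnihilator = n - finrank K p := by
    intro p
    have := Subspace.finrank_add_finrank_dualCoannihilator_eq (p.dualAnnihilator)
    rw [Subspace.dualAnnihilator_dualCoannihilator_eq, hV] at this
    omega
  have hcoann : ∀ U : Submodule K (Module.Dual K V),
      finrank K U.dualCoannihilator = n - finrank K U := by
    intro U
    have := Subspace.finrank_add_finrank_dualCoannihilator_eq U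
    rw [hV] at this
    omega
  have hle : ∀ p : Submodule K V, finrank K p ≤ n := by
    intro p
    have := Submodule.finrank_le p
    omega
  have e1 : {p : Submodule K V // finrank K p = r} ≃
      {U : Submodule K (Module.Dual K V) // finrank K U = n - r} :=
    { toFun := fun p => ⟨p.1.dualAnnihilator, by rw [hann, p.2]⟩
      invFun := fun U => ⟨U.1.dualCoannihilator, by rw [hcoann, U.2]; omega⟩
      left_inv := fun p => Subtype.ext Subspace.dualAnnihilator_dualCoannihilator_eq
      right_inv := fun U => Subtype.ext (Subspace.dualCoannihilator_dualAnnihilator_eq) }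
  have ee : Module.Dual K V ≃ₗ[K] V := (Pi.basisFun K (Fin n)).toDualEquiv.symm
  have e2 : {U : Submodule K (Module.Dual K V) // finrank K U = n - r} ≃
      {p : Submodule K V // finrank K p = n - r} :=
    Equiv.subtypeEquiv (Submodule.orderIsoMapComap ee).toEquiv
      (fun U => by
        have h2 : finrank K (Submodule.map (ee : Module.Dual K V →ₗ[K] V) U) = finrank K U :=
          LinearEquiv.finrank_map_eq ee U
        rw [show ((Submodule.orderIsoMapComap ee).toEquiv U) = Submodule.map (ee : Module.Dual K V →ₗ[K] V) U from rfl,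
          h2])
  exact (Nat.card_congr (e1.trans e2)).symm

end Counting

section Counting2
variable {K W : Type*} [Field K] [Fintype K] [Field W] [Fintype W]

lemma rankWeight_eq_finrank_range {n : ℕ} [Algebra K W] (x : Fin n → W) :
    rankWeight K x = finrank K (LinearMap.range
      ((Pi.basisFun K (Fin n)).constr (S := K) (M' := W) x)) := by
  rw [Basis.constr_range, rankWeight]

lemma card_rank_vectors [Algebra K W] {n r : ℕ} (hr : r ≤ n) :
    Nat.card {x : Fin n → W // rankWeight K x = r} =
      qBinom K n r * ∏ j ∈ Finset.range r, (Fintype.card W - Fintype.card K ^ j) := by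
  classical
  have e : {x : Fin n → W // rankWeight K x = r} ≃
      {f : (Fin n → K) →ₗ[K] W // finrank K (LinearMap.range f) = r} :=
    Equiv.subtypeEquiv ((Pi.basisFun K (Fin n)).constr (S := K) (M' := W)).toEquiv
      (fun x => by rw [rankWeight_eq_finrank_range]; exact Iff.rfl)
  rw [Nat.card_congr e, card_rank_maps n r hr, card_subspaces_dual n r hr, qBinom]

omit [Fintype K] [Fintype W] in
lemma rankWeight_le [Algebra K W] {n : ℕ} (x : Fin n → W) : rankWeight K x ≤ n := by
  classical
  have h2 : (Set.range x).toFinset.card ≤ n := by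
    rw [Set.toFinset_range]
    exact Finset.card_image_le.trans (by simp)
  exact le_trans (finrank_span_le_card (R := K) (Set.range x)) h2

end Counting2

/-- Counting inequalities for covering codes: if `C` has rank covering radius at most `ρ`,
`u` is at rank distance `δ ≤ ρ` from `C`, `A i` counts codewords at rank distance `i` from
`u`, `N i = [n choose i]_q ∏_{j<i}(q^m - q^j)` counts vectors of rank `i`, and `J r s i` is
the intersection number (number of vectors at distance `r` from `u` and `s` from any fixed
vector at distance `i` from `u`), then `A i = 0` for `i < δ`, `A δ ≥ 1`, `A i ≤ N i`,
`Σ_{i≤n} A i = |C|`, and `Σ_{i≤n} A i · Σ_{s≤ρ} J r s i ≥ N r` for all `r ≤ n`. -/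
theorem stmt18 (q m n ρ δ : ℕ) (Fq Fqm : Type*) [Field Fq] [Fintype Fq] [Field Fqm]
    [Fintype Fqm] [Algebra Fq Fqm] (hq : Fintype.card Fq = q)
    (hm : Module.finrank Fq Fqm = m) (hnm : n ≤ m) (hδρ : δ ≤ ρ)
    (C : Finset (Fin n → Fqm))
    (hcov : ∀ x : Fin n → Fqm, ∃ c ∈ C, rankWeight Fq (x - c) ≤ ρ)
    (u : Fin n → Fqm)
    (hδ1 : ∃ c ∈ C, rankWeight Fq (u - c) = δ)
    (hδ2 : ∀ c ∈ C, δ ≤ rankWeight Fq (u - c))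
    (A : ℕ → ℕ)
    (hA : ∀ i, A i = Nat.card {c : Fin n → Fqm // c ∈ C ∧ rankWeight Fq (u - c) = i})
    (J : ℕ → ℕ → ℕ → ℕ)
    (hJ : ∀ r s i (z : Fin n → Fqm), rankWeight Fq (u - z) = i →
      J r s i = Nat.card {x : Fin n → Fqm //
        rankWeight Fq (x - u) = r ∧ rankWeight Fq (x - z) = s}) :
    (∀ i, i < δ → A i = 0) ∧ 1 ≤ A δ ∧
    (∀ i, A i ≤ qBinom Fq n i * ∏ j ∈ Finset.range i, (q ^ m - q ^ j)) ∧
    (∑ i ∈ Finset.range (n + 1), A i = C.card) ∧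
    (∀ r, r ≤ n →
      qBinom Fq n r * ∏ j ∈ Finset.range r, (q ^ m - q ^ j) ≤
        ∑ i ∈ Finset.range (n + 1), A i * ∑ s ∈ Finset.range (ρ + 1), J r s i) := by
  classical
  have hrw_le : ∀ x : Fin n → Fqm, rankWeight Fq x ≤ n := fun x => rankWeight_le x
  have hcards : Fintype.card Fqm = q ^ m := by
    rw [card_eq_pow_finrank (K := Fq) (V := Fqm), hq, hm]
  have hN : ∀ k, k ≤ n → Nat.card {x : Fin n → Fqm // rankWeight Fq x = k} =
      qBinom Fq n k * ∏ j ∈ Finset.range k, (q ^ m - q ^ j) := by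
    intro k hk
    rw [card_rank_vectors (K := Fq) (W := Fqm) hk, hcards, hq]
  have hC : ∀ i, A i = (C.filter (fun c => rankWeight Fq (u - c) = i)).card := by
    intro i
    rw [hA i, Nat.card_eq_fintype_card, Fintype.card_subtype]
    congr 1
    ext c
    simp
  refine ⟨?_, ?_, ?_, ?_, ?_⟩
  · intro i hi
    have he : IsEmpty {c : Fin n → Fqm // c ∈ C ∧ rankWeight Fq (u - c) = i} := by
      constructor
      rintro ⟨c, hc, hrw⟩
      have := hδ2 c hc
      omega
    rw [hA i]
    exact Nat.card_of_isEmpty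
  · rw [hA δ]
    obtain ⟨c, hc, hrw⟩ := hδ1
    haveI : Nonempty {c : Fin n → Fqm // c ∈ C ∧ rankWeight Fq (u - c) = δ} :=
      ⟨⟨c, hc, hrw⟩⟩
    exact Nat.card_pos
  · intro i
    by_cases hi : i ≤ n
    · rw [hA i, ← hN i hi]
      exact Nat.card_le_card_of_injective
        (fun c : {c : Fin n → Fqm // c ∈ C ∧ rankWeight Fq (u - c) = i} =>
          (⟨u - c.1, c.2.2⟩ : {x : Fin n → Fqm // rankWeight Fq x = i}))
        (fun a b h => Subtype.ext (sub_right_injective (congrArg Subtype.val h)))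
    · have hz : A i = 0 := by
        have he : IsEmpty {c : Fin n → Fqm // c ∈ C ∧ rankWeight Fq (u - c) = i} := by
          constructor
          rintro ⟨c, hc, hrw⟩
          have := hrw_le (u - c)
          omega
        rw [hA i]
        exact Nat.card_of_isEmpty
      rw [hz]
      exact Nat.zero_le _
  · have h1 := Finset.card_eq_sum_card_fiberwise (s := C) (t := Finset.range (n+1))
      (f := fun c => rankWeight Fq (u - c))
      (fun c _ => Finset.mem_range.mpr (Nat.lt_succ_of_le (hrw_le (u - c))))
    rw [h1]
    exact Finset.sum_congr rfl (fun i _ => hC i)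
  · intro r hrn
    set Sr := Finset.univ.filter (fun x : Fin n → Fqm => rankWeight Fq (x - u) = r) with hSr
    have hSrcard : Sr.card = qBinom Fq n r * ∏ j ∈ Finset.range r, (q ^ m - q ^ j) := by
      rw [← hN r hrn, Nat.card_eq_fintype_card, hSr, ← Fintype.card_subtype]
      exact (Fintype.card_congr (Equiv.subtypeEquiv
        (p := fun x : Fin n → Fqm => rankWeight Fq (x - u) = r)
        (q := fun y : Fin n → Fqm => rankWeight Fq y = r)
        (Equiv.subRight u) (fun x => Iff.rfl)))
    have hsub : Sr ⊆ C.biUnion (fun c => Sr.filter (fun x => rankWeight Fq (x - c) ≤ ρ)) := by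
      intro x hx
      obtain ⟨c, hc, hcd⟩ := hcov x
      exact Finset.mem_biUnion.mpr ⟨c, hc, Finset.mem_filter.mpr ⟨hx, hcd⟩⟩
    have hstep1 : Sr.card ≤ ∑ c ∈ C, (Sr.filter (fun x => rankWeight Fq (x - c) ≤ ρ)).card :=
      (Finset.card_le_card hsub).trans Finset.card_biUnion_le
    have hstep2 : ∀ c, (Sr.filter (fun x => rankWeight Fq (x - c) ≤ ρ)).card =
        ∑ s ∈ Finset.range (ρ + 1), J r s (rankWeight Fq (u - c)) := by
      intro c
      rw [Finset.card_eq_sum_card_fiberwise (f := fun x => rankWeight Fq (x - c))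
        (t := Finset.range (ρ + 1))
        (fun x hx => Finset.mem_range.mpr (Nat.lt_succ_of_le (Finset.mem_filter.mp hx).2))]
      refine Finset.sum_congr rfl (fun s hs => ?_)
      have hs' : s ≤ ρ := Nat.lt_succ_iff.mp (Finset.mem_range.mp hs)
      have hfil : ((Sr.filter (fun x => rankWeight Fq (x - c) ≤ ρ))).filter
          (fun x => rankWeight Fq (x - c) = s)
          = Finset.univ.filter
            (fun x => rankWeight Fq (x - u) = r ∧ rankWeight Fq (x - c) = s) := by
        rw [hSr]
        ext x
        simp only [Finset.mem_filter, Finset.mem_univ, true_and]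
        constructor
        · rintro ⟨⟨h1, h2⟩, h3⟩
          exact ⟨h1, h3⟩
        · rintro ⟨h1, h3⟩
          exact ⟨⟨h1, h3 ▸ hs'⟩, h3⟩
      rw [hfil, ← Fintype.card_subtype, ← Nat.card_eq_fintype_card,
        ← hJ r s (rankWeight Fq (u - c)) c rfl]
    have hstep3 : ∑ c ∈ C, (∑ s ∈ Finset.range (ρ + 1), J r s (rankWeight Fq (u - c))) =
        ∑ i ∈ Finset.range (n + 1), A i * ∑ s ∈ Finset.range (ρ + 1), J r s i := by
      rw [← Finset.sum_fiberwise_of_maps_to (t := Finset.range (n+1))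
        (g := fun c => rankWeight Fq (u - c))
        (fun c _ => Finset.mem_range.mpr (Nat.lt_succ_of_le (hrw_le (u - c))))
        (fun c => ∑ s ∈ Finset.range (ρ+1), J r s (rankWeight Fq (u - c)))]
      refine Finset.sum_congr rfl (fun i _ => ?_)
      rw [hC i,
        Finset.sum_congr rfl (fun c hc => by rw [(Finset.mem_filter.mp hc).2]),
        Finset.sum_const, smul_eq_mul]
    calc qBinom Fq n r * ∏ j ∈ Finset.range r, (q ^ m - q ^ j) = Sr.card := hSrcard.symm
      _ ≤ ∑ c ∈ C, (Sr.filter (fun x => rankWeight Fq (x - c) ≤ ρ)).card := hstep1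
      _ = ∑ c ∈ C, (∑ s ∈ Finset.range (ρ + 1), J r s (rankWeight Fq (u - c))) :=
          Finset.sum_congr rfl (fun c _ => hstep2 c)
      _ = ∑ i ∈ Finset.range (n + 1), A i * ∑ s ∈ Finset.range (ρ + 1), J r s i := hstep3
end
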